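/- arXiv:1912.00883 — 9 statements merged into one kernel-verified Lean document; each statement's English description precedes it below -/
import Mathlib

section
/- Let α be normal in F_{q^n} over F_q, write x^n − 1 = f_1^τ ⋯ f_r^τ with f_i distinct irreducibles in F_q[x] and τ = p^{v_p(n)}. Let β = g ∘ α and g_i = g mod f_i^τ. Then β is normal if and only if gcd(f_i, g_i) = 1 for each i = 1, ..., r. -/
open Polynomial

variable {Fq Fqn : Type*}

/-- Frobenius action of a polynomial on a field element: `f ∘ α = Σ aᵢ α^(q^i)`. -/
noncomputable def circ [Field Fq] [Field Fqn] [Algebra Fq Fqn] (q : ℕ) (f : Fq[X]) (α : Fqn) : Fqn :=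
  f.sum fun i a => algebraMap Fq Fqn a * α ^ q ^ i

/-- `α` is a normal element: its conjugates `α, α^q, …, α^(q^(n-1))` form an `Fq`-basis. -/
def IsNormal (Fq : Type*) {Fqn : Type*} [Field Fq] [Field Fqn] [Algebra Fq Fqn]
    (q n : ℕ) (α : Fqn) : Prop :=
  LinearIndependent Fq (fun i : Fin n => α ^ q ^ (i : ℕ)) ∧
    Submodule.span Fq (Set.range fun i : Fin n => α ^ q ^ (i : ℕ)) = ⊤

/-- `A` is the annihilator of `α`: the monic polynomial of least degree with `A ∘ α = 0`. -/
def IsAnnihilator [Field Fq] [Field Fqn] [Algebra Fq Fqn] (q : ℕ) (α : Fqn) (A : Fq[X]) : Prop :=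
  A.Monic ∧ circ q A α = 0 ∧ ∀ B : Fq[X], B.Monic → circ q B α = 0 → A.degree ≤ B.degree

section Aux
variable [Field Fq] [Field Fqn] [Algebra Fq Fqn]

lemma circ_add' (q : ℕ) (f g : Fq[X]) (α : Fqn) :
    circ q (f + g) α = circ q f α + circ q g α := by
  unfold circ
  rw [Polynomial.sum_add_index] <;> intros <;> simp [add_mul]

lemma circ_smul' (q : ℕ) (c : Fq) (f : Fq[X]) (α : Fqn) :
    circ q (c • f) α = c • circ q f α := by
  unfold circ
  rw [Polynomial.sum_smul_index _ _ _ (fun i => by simp)]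
  rw [Polynomial.sum_def, Polynomial.sum_def, Finset.smul_sum]
  refine Finset.sum_congr rfl fun i _ => ?_
  rw [map_mul, Algebra.smul_def, mul_assoc]

lemma circ_zero' (q : ℕ) (α : Fqn) : circ q (0 : Fq[X]) α = 0 :=
  Polynomial.sum_zero_index _

lemma circ_monomial' (q : ℕ) (k : ℕ) (a : Fq) (α : Fqn) :
    circ q (monomial k a) α = algebraMap Fq Fqn a * α ^ q ^ k :=
  Polynomial.sum_monomial_index _ _ (by simp)

lemma circ_one' (q : ℕ) (α : Fqn) : circ q (1 : Fq[X]) α = α := by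
  rw [← Polynomial.monomial_zero_one, circ_monomial']
  simp

lemma circ_neg' (q : ℕ) (f : Fq[X]) (α : Fqn) : circ q (-f) α = -circ q f α := by
  have : (-f : Fq[X]) = (-1 : Fq) • f := by simp
  rw [this, circ_smul', neg_smul, one_smul]

lemma circ_sub' (q : ℕ) (f g : Fq[X]) (α : Fqn) :
    circ q (f - g) α = circ q f α - circ q g α := by
  rw [sub_eq_add_neg, circ_add', circ_neg', sub_eq_add_neg]

lemma circ_C_mul' (q : ℕ) (c : Fq) (f : Fq[X]) (α : Fqn) :
    circ q (C c * f) α = algebraMap Fq Fqn c * circ q f α := by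
  rw [← Polynomial.smul_eq_C_mul, circ_smul', Algebra.smul_def]

lemma circ_range (q : ℕ) (f : Fq[X]) (α : Fqn) {N : ℕ} (hN : f.natDegree < N) :
    circ q f α = ∑ i ∈ Finset.range N, algebraMap Fq Fqn (f.coeff i) * α ^ q ^ i :=
  Polynomial.sum_over_range' f (by simp) N hN

variable {q : ℕ} (F : Fqn →+* Fqn) (hF : ∀ x, F x = x ^ q) (hq : ∀ c : Fq, c ^ q = c)

include hF hq in
lemma circ_X_mul' (f : Fq[X]) (α : Fqn) : circ q (X * f) α = circ q f α ^ q := by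
  rw [circ_range q (X * f) α (N := f.natDegree + 2)
    (lt_of_le_of_lt Polynomial.natDegree_mul_le (by simp [Polynomial.natDegree_X]; omega)),
    circ_range q f α (N := f.natDegree + 1) (Nat.lt_succ_self _),
    Finset.sum_range_succ']
  have h0 : (X * f : Fq[X]).coeff 0 = 0 := by
    rw [Polynomial.mul_coeff_zero, Polynomial.coeff_X_zero, zero_mul]
  rw [h0, map_zero, zero_mul, add_zero, ← hF, map_sum]
  refine Finset.sum_congr rfl fun i _ => ?_
  rw [Polynomial.coeff_X_mul, map_mul, hF, hF, ← map_pow, hq, ← pow_mul, ← pow_succ]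

include hF hq in
lemma circ_X_pow_mul' (k : ℕ) (f : Fq[X]) (α : Fqn) :
    circ q (X ^ k * f) α = circ q f α ^ q ^ k := by
  induction k with
  | zero => simp
  | succ k ih =>
    rw [pow_succ' X, mul_assoc, circ_X_mul' F hF hq, ih, ← pow_mul, ← pow_succ]

include hF hq in
lemma circ_mul' (a b : Fq[X]) (α : Fqn) :
    circ q (a * b) α = circ q a (circ q b α) := by
  induction a using Polynomial.induction_on' with
  | add u v hu hv => rw [add_mul, circ_add', hu, hv, circ_add']
  | monomial k c =>
    rw [← Polynomial.C_mul_X_pow_eq_monomial, mul_assoc, circ_C_mul', circ_C_mul',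
      circ_X_pow_mul' F hF hq]
    have : circ q ((X : Fq[X]) ^ k) (circ q b α) = circ q b α ^ q ^ k := by
      have := circ_X_pow_mul' F hF hq k (1 : Fq[X]) (circ q b α)
      rwa [mul_one, circ_one'] at this
    rw [this]

end Aux

theorem stmt7 (p m q n : ℕ) [Field Fq] [Fintype Fq] [Field Fqn] [Algebra Fq Fqn]
    (hp : p.Prime) (hm : 0 < m) (hpq : q = p ^ m) (hcard : Fintype.card Fq = q)
    (hn : 0 < n) (hrank : Module.finrank Fq Fqn = n)
    (r : ℕ) (f : Fin r → Fq[X]) (hirr : ∀ i, Irreducible (f i))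
    (hmonic : ∀ i, (f i).Monic) (hinj : Function.Injective f)
    (hfact : (X : Fq[X]) ^ n - 1 = ∏ i, f i ^ p ^ padicValNat p n)
    (α : Fqn) (hα : IsNormal Fq q n α) (g : Fq[X]) :
    IsNormal Fq q n (circ q g α) ↔ ∀ i, IsCoprime (f i) (g % f i ^ p ^ padicValNat p n) := by
  classical
  set τ := p ^ padicValNat p n with hτdef
  have hτ : 0 < τ := pow_pos hp.pos _
  -- characteristic setup
  have hchar : CharP Fq p := by
    have h1 : ((p ^ m : ℕ) : Fq) = 0 := by
      rw [← hpq, ← hcard]; exact FiniteField.cast_card_eq_zero Fq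
    have h2 : ringChar Fq ∣ p ^ m := ringChar.dvd h1
    have h3 : (ringChar Fq).Prime := by
      haveI := ringChar.charP Fq
      exact CharP.char_is_prime Fq (ringChar Fq)
    have h4 : ringChar Fq = p :=
      (Nat.prime_dvd_prime_iff_eq h3 hp).mp (h3.dvd_of_dvd_pow h2)
    exact h4 ▸ ringChar.charP Fq
  haveI := hchar
  haveI : CharP Fqn p := charP_of_injective_algebraMap (algebraMap Fq Fqn).injective p
  haveI : ExpChar Fqn p := .prime hp
  set F : Fqn →+* Fqn := iterateFrobenius Fqn p m with hFdef
  have hF : ∀ x : Fqn, F x = x ^ q := fun x => by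
    rw [hFdef, iterateFrobenius_def, hpq]
  have hqc : ∀ c : Fq, c ^ q = c := fun c => by
    rw [← hcard]; exact FiniteField.pow_card c
  -- finiteness of Fqn
  haveI : FiniteDimensional Fq Fqn := FiniteDimensional.of_finrank_pos (hrank ▸ hn)
  haveI : Finite Fqn := Module.finite_of_finite Fq
  haveI : Fintype Fqn := Fintype.ofFinite Fqn
  have hcardn : Fintype.card Fqn = q ^ n := by
    rw [Module.card_eq_pow_finrank (K := Fq) (V := Fqn), hcard, hrank]
  have hxq : ∀ x : Fqn, x ^ q ^ n = x := fun x => by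
    rw [← hcardn]; exact FiniteField.pow_card x
  -- basic facts about X^n - 1
  have hXn1 : ((X : Fq[X]) ^ n - 1) = X ^ n - C 1 := by rw [map_one]
  have hmonicXn : ((X : Fq[X]) ^ n - 1).Monic := by
    rw [hXn1]; exact monic_X_pow_sub_C 1 hn.ne'
  have hXnne : ((X : Fq[X]) ^ n - 1) ≠ 0 := hmonicXn.ne_zero
  have hdegXn : ((X : Fq[X]) ^ n - 1).natDegree = n := by
    rw [hXn1, natDegree_X_pow_sub_C]
  -- circ of multiples of X^n - 1 vanishes
  have hXnzero : ∀ (h : Fq[X]) (γ : Fqn), circ q (((X : Fq[X]) ^ n - 1) * h) γ = 0 := by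
    intro h γ
    have hXpow : ∀ (k : ℕ) (γ : Fqn), circ q ((X : Fq[X]) ^ k) γ = γ ^ q ^ k := by
      intro k γ
      have := circ_X_pow_mul' F hF hqc k 1 γ
      rwa [mul_one, circ_one'] at this
    rw [circ_mul' F hF hqc, circ_sub', circ_one', hXpow, hxq, sub_self]
  have hXpow : ∀ (k : ℕ) (γ : Fqn), circ q ((X : Fq[X]) ^ k) γ = γ ^ q ^ k := by
    intro k γ
    have := circ_X_pow_mul' F hF hqc k 1 γ
    rwa [mul_one, circ_one'] at this
  -- circ in terms of a Fin n sum, for low-degree polynomials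
  have hfin : ∀ (u : Fq[X]) (γ : Fqn), u.natDegree < n →
      circ q u γ = ∑ i : Fin n, u.coeff i • γ ^ q ^ (i : ℕ) := by
    intro u γ hu
    rw [circ_range q u γ hu, Fin.sum_univ_eq_sum_range (fun i => u.coeff i • γ ^ q ^ i) n]
    exact Finset.sum_congr rfl fun i _ => (Algebra.smul_def _ _).symm
  -- reduction mod X^n - 1
  have hmod : ∀ (u : Fq[X]) (γ : Fqn),
      circ q u γ = circ q (u % ((X : Fq[X]) ^ n - 1)) γ := by
    intro u γ
    conv_lhs => rw [← EuclideanDomain.div_add_mod u ((X : Fq[X]) ^ n - 1)]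
    rw [circ_add', hXnzero, zero_add]
  have hmoddeg : ∀ u : Fq[X], (u % ((X : Fq[X]) ^ n - 1)).natDegree < n := by
    intro u
    have : u % ((X : Fq[X]) ^ n - 1) = u %ₘ ((X : Fq[X]) ^ n - 1) := by
      rw [Polynomial.mod_def, hmonicXn.leadingCoeff, inv_one, map_one, mul_one]
    rw [this]
    rcases eq_or_ne (u %ₘ ((X : Fq[X]) ^ n - 1)) 0 with h0 | h0
    · simpa [h0] using hn
    · rw [natDegree_lt_iff_degree_lt h0]
      have := degree_modByMonic_lt u hmonicXn
      rwa [degree_eq_natDegree hXnne, hdegXn] at this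
  -- any circ value at γ lies in the span of γ's conjugates
  have hspan : ∀ (u : Fq[X]) (γ : Fqn),
      circ q u γ ∈ Submodule.span Fq (Set.range fun i : Fin n => γ ^ q ^ (i : ℕ)) := by
    intro u γ
    rw [hmod u γ, hfin _ γ (hmoddeg u)]
    exact Submodule.sum_mem _ fun i _ =>
      Submodule.smul_mem _ _ (Submodule.subset_span ⟨i, rfl⟩)
  set β := circ q g α with hβdef
  constructor
  · -- normal → coprime
    intro hβ i
    by_contra hnc
    have hdvdmod : f i ∣ g % f i ^ τ := by
      by_contra hd
      exact hnc (((hirr i).coprime_iff_not_dvd).mpr hd)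
    have hdvdg : f i ∣ g := by
      conv_rhs => rw [← EuclideanDomain.div_add_mod g (f i ^ τ)]
      exact dvd_add (dvd_mul_of_dvd_left (dvd_pow_self _ hτ.ne') _) hdvdmod
    obtain ⟨g', hg'⟩ := hdvdg
    set h : Fq[X] := f i ^ (τ - 1) * ∏ j ∈ Finset.univ.erase i, f j ^ τ with hhdef
    have hfine : f i ≠ 0 := (hirr i).ne_zero
    have hkey : f i * h = (X : Fq[X]) ^ n - 1 := by
      rw [hfact, hhdef, ← mul_assoc, ← pow_succ' (f i), show τ - 1 + 1 = τ from by omega]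
      exact Finset.mul_prod_erase Finset.univ (fun j => f j ^ τ) (Finset.mem_univ i)
    have hhne : h ≠ 0 := by
      rw [hhdef]
      exact mul_ne_zero (pow_ne_zero _ hfine)
        (Finset.prod_ne_zero_iff.mpr fun j _ => pow_ne_zero _ (hirr j).ne_zero)
    have hdeg : (f i).natDegree + h.natDegree = n := by
      rw [← natDegree_mul hfine hhne, hkey, hdegXn]
    have hhdeg : h.natDegree < n := by
      have := (hirr i).natDegree_pos
      omega
    have hzero : circ q h β = 0 := by
      rw [hβdef, ← circ_mul' F hF hqc]
      have : h * g = ((X : Fq[X]) ^ n - 1) * g' := by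
        rw [hg', ← mul_assoc, mul_comm h (f i), hkey]
      rw [this, hXnzero]
    have hcoeff : ∀ i : Fin n, h.coeff i = 0 := by
      apply Fintype.linearIndependent_iff.mp hβ.1
      rw [← hfin h β hhdeg, hzero]
    apply hhne
    ext j
    rcases lt_or_ge j n with hj | hj
    · simpa using hcoeff ⟨j, hj⟩
    · simp [Polynomial.coeff_eq_zero_of_natDegree_lt (lt_of_lt_of_le hhdeg hj)]
  · -- coprime → normal
    intro hc
    have hcop : IsCoprime g ((X : Fq[X]) ^ n - 1) := by
      rw [hfact]
      refine IsCoprime.prod_right_iff.mpr fun i _ => (IsCoprime.pow_right_iff hτ).mpr ?_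
      have h1 : IsCoprime (f i) (g % f i ^ τ) := hc i
      have h2 : IsCoprime (f i) g := by
        have := h1.add_mul_left_right (f i ^ (τ - 1) * (g / f i ^ τ))
        have heq : g % f i ^ τ + f i * (f i ^ (τ - 1) * (g / f i ^ τ)) = g := by
          rw [← mul_assoc, ← pow_succ' (f i), show τ - 1 + 1 = τ from by omega, add_comm]
          exact EuclideanDomain.div_add_mod g (f i ^ τ)
        rwa [heq] at this
      exact h2.symm
    obtain ⟨u, v, huv⟩ := hcop
    have hαu : circ q u β = α := by
      rw [hβdef, ← circ_mul' F hF hqc]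
      have : (u * g : Fq[X]) = 1 - ((X : Fq[X]) ^ n - 1) * v := by
        rw [mul_comm ((X : Fq[X]) ^ n - 1) v]
        linear_combination huv
      rw [this, circ_sub', circ_one', hXnzero, sub_zero]
    have htop : (⊤ : Submodule Fq Fqn) ≤
        Submodule.span Fq (Set.range fun i : Fin n => β ^ q ^ (i : ℕ)) := by
      rw [← hα.2]
      refine Submodule.span_le.mpr ?_
      rintro _ ⟨j, rfl⟩
      have hj : α ^ q ^ (j : ℕ) = circ q ((X : Fq[X]) ^ (j : ℕ) * u) β := by
        rw [circ_X_pow_mul' F hF hqc, hαu]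
      simpa only [SetLike.mem_coe, hj] using hspan ((X : Fq[X]) ^ (j : ℕ) * u) β
    exact ⟨linearIndependent_of_top_le_span_of_card_eq_finrank htop (by simp [hrank]),
      le_antisymm le_top htop⟩
end

section
/- Suppose gcd(p, n) = 1 where q is a power of p. Write F_{q^n} = V_1 ⊕ ⋯ ⊕ V_r where V_i = ker(f_i) (under the Frobenius action) and x^n − 1 = f_1 ⋯ f_r with f_i distinct irreducibles. Then β = β_1 + ⋯ + β_r with β_i ∈ V_i is a normal element if and only if β_i ≠ 0 for every i. -/
open Polynomial

variable {Fq Fqn : Type*}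

theorem stmt8 (p m q n : ℕ) [Field Fq] [Fintype Fq] [Field Fqn] [Algebra Fq Fqn]
    (hp : p.Prime) (hm : 0 < m) (hpq : q = p ^ m) (hcard : Fintype.card Fq = q)
    (hn : 0 < n) (hrank : Module.finrank Fq Fqn = n) (hcop : Nat.Coprime p n)
    (r : ℕ) (f : Fin r → Fq[X]) (hirr : ∀ i, Irreducible (f i))
    (hmonic : ∀ i, (f i).Monic) (hinj : Function.Injective f)
    (hfact : (X : Fq[X]) ^ n - 1 = ∏ i, f i)
    (β : Fin r → Fqn) (hker : ∀ i, circ q (f i) (β i) = 0) :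
    IsNormal Fq q n (∑ i, β i) ↔ ∀ i, β i ≠ 0 := by
  have hfq : Fact p.Prime := ⟨hp⟩
  -- characteristic p on both fields
  have hcharFq : CharP Fq p := by
    obtain ⟨k, hk, hck⟩ := FiniteField.card Fq (ringChar Fq)
    have h1 : p ∣ ringChar Fq ^ (k : ℕ) := by
      rw [← hck, hcard, hpq]; exact dvd_pow_self p hm.ne'
    have h2 : p = ringChar Fq :=
      (Nat.prime_dvd_prime_iff_eq hp hk).mp (hp.dvd_of_dvd_pow h1)
    rw [h2]; exact ringChar.charP Fq
  have hcharFqn : CharP Fqn p :=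
    charP_of_injective_algebraMap (algebraMap Fq Fqn).injective p
  have hFD : FiniteDimensional Fq Fqn :=
    FiniteDimensional.of_finrank_pos (by rw [hrank]; exact hn)
  have hfin : Finite Fqn := Module.finite_of_finite Fq
  cases nonempty_fintype Fqn
  -- the Frobenius-power linear map
  let σ : Fqn →ₗ[Fq] Fqn :=
    { toFun := fun x => x ^ q
      map_add' := fun x y => by rw [hpq]; exact add_pow_char_pow x y p m
      map_smul' := fun c x => by
        simp only [RingHom.id_apply]
        rw [Algebra.smul_def, Algebra.smul_def, mul_pow, ← map_pow, ← hcard,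
          FiniteField.pow_card] }
  have hσ : ∀ x : Fqn, σ x = x ^ q := fun _ => rfl
  have hpow : ∀ (i : ℕ) (x : Fqn), (σ ^ i) x = x ^ q ^ i := by
    intro i
    induction i with
    | zero => intro x; simp
    | succ i ih =>
      intro x
      rw [pow_succ, Module.End.mul_apply, hσ, ih, ← pow_mul, pow_succ, mul_comm (q^i) q, pow_mul]
  have circ_eq : ∀ (g : Fq[X]) (α : Fqn), circ q g α = (aeval σ) g α := by
    intro g α
    rw [aeval_endomorphism]
    unfold circ Polynomial.sum
    exact Finset.sum_congr rfl fun i _ => by simp only [hpow, Algebra.smul_def]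
  have hmulact : ∀ (g h : Fq[X]) (α : Fqn),
      (aeval σ) (g * h) α = (aeval σ) g ((aeval σ) h α) := by
    intro g h α; rw [map_mul, Module.End.mul_apply]
  -- x^(q^n) = x
  have hcardn : Fintype.card Fqn = q ^ n := by
    rw [Module.card_eq_pow_finrank (K := Fq) (V := Fqn), hcard, hrank]
  have hfrobn : ∀ α : Fqn, α ^ q ^ n = α := by
    intro α; rw [← hcardn]; exact FiniteField.pow_card α
  -- annihilator ideal argument
  have annih : ∀ (j : Fin r) (γ : Fqn), γ ≠ 0 → (aeval σ) (f j) γ = 0 →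
      ∀ g : Fq[X], (aeval σ) g γ = 0 → f j ∣ g := by
    intro j γ hγ hfγ g hg
    let I : Ideal Fq[X] :=
      { carrier := {g | (aeval σ) g γ = 0}
        add_mem' := fun {a b} ha hb => by
          simp only [Set.mem_setOf_eq] at *
          rw [map_add, LinearMap.add_apply, ha, hb, add_zero]
        zero_mem' := by simp only [Set.mem_setOf_eq, map_zero, LinearMap.zero_apply]
        smul_mem' := fun c x hx => by
          simp only [Set.mem_setOf_eq, smul_eq_mul] at *
          rw [hmulact, hx, map_zero] }
    have hle : Ideal.span {f j} ≤ I := by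
      rw [Ideal.span_le, Set.singleton_subset_iff]; exact hfγ
    have hne : I ≠ ⊤ := by
      intro h
      have h1 : (1 : Fq[X]) ∈ I := h ▸ Submodule.mem_top
      have : (aeval σ) (1 : Fq[X]) γ = 0 := h1
      rw [map_one, Module.End.one_apply] at this
      exact hγ this
    have hmax := PrincipalIdealRing.isMaximal_of_irreducible (hirr j)
    have heq : Ideal.span {f j} = I := hmax.eq_of_le hne hle
    rw [← Ideal.mem_span_singleton, heq]; exact hg
  -- distinctness and coprimality
  have hnd : ∀ i j, f i ∣ f j → i = j := fun i j h =>
    hinj (eq_of_monic_of_associated (hmonic i) (hmonic j) ((hirr i).associated_of_dvd (hirr j) h))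
  have hcopr : ∀ i j, i ≠ j → IsCoprime (f i) (f j) := fun i j hij =>
    ((hirr i).coprime_iff_not_dvd).mpr fun hd => hij (hnd i j hd)
  -- complementary products
  set g : Fin r → Fq[X] := fun j => ∏ i ∈ Finset.univ.erase j, f i with hg
  have hgmonic : ∀ j, (g j).Monic := fun j =>
    monic_prod_of_monic _ _ fun i _ => hmonic i
  have hfg : ∀ j, f j * g j = ∏ i, f i := fun j =>
    Finset.mul_prod_erase _ _ (Finset.mem_univ j)
  have hndvd : ∀ j, ¬ f j ∣ g j := by
    intro j hd
    obtain ⟨i, hi, hdi⟩ := ((hirr j).prime.dvd_finset_prod_iff _).mp hd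
    exact (Finset.ne_of_mem_erase hi).symm (hnd j i hdi)
  have hkill : ∀ j i, i ≠ j → (aeval σ) (g j) (β i) = 0 := by
    intro j i hij
    have hdv : f i ∣ g j :=
      Finset.dvd_prod_of_mem f (Finset.mem_erase.mpr ⟨hij, Finset.mem_univ i⟩)
    obtain ⟨c, hc⟩ := hdv
    rw [hc, mul_comm, hmulact, ← circ_eq (f i) (β i), hker i, map_zero]
  have hgβ : ∀ j, (aeval σ) (g j) (∑ i, β i) = (aeval σ) (g j) (β j) := by
    intro j
    rw [map_sum]
    exact Finset.sum_eq_single j (fun i _ hij => hkill j i hij) (fun h => absurd (Finset.mem_univ j) h)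
  -- degrees
  have hdegprod : ((X : Fq[X]) ^ n - 1).natDegree = n := by
    have : ((X : Fq[X]) ^ n - C 1).natDegree = n := natDegree_X_pow_sub_C
    simpa using this
  have hdegXn : ((X : Fq[X]) ^ n - 1).degree = (n : WithBot ℕ) := by
    have hm1 : ((X : Fq[X]) ^ n - 1).Monic := by
      rw [hfact]; exact monic_prod_of_monic _ _ fun i _ => hmonic i
    rw [degree_eq_natDegree hm1.ne_zero, hdegprod]
  have hdegsum : (∑ i, (f i).natDegree) = n := by
    rw [← hdegprod, hfact, natDegree_prod _ _ fun i _ => (hmonic i).ne_zero]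
  have hdegg : ∀ j, (g j).natDegree < n := by
    intro j
    have h1 : (f j).natDegree + (g j).natDegree = n := by
      rw [← (hmonic j).natDegree_mul (hgmonic j), hfg, ← hfact, hdegprod]
    have h2 : 0 < (f j).natDegree := (hirr j).natDegree_pos
    omega
  have hannXn : ∀ α : Fqn, (aeval σ) ((X : Fq[X]) ^ n - 1) α = 0 := by
    intro α
    rw [map_sub, map_pow, aeval_X, map_one, LinearMap.sub_apply, Module.End.one_apply, hpow,
      hfrobn, sub_self]
  have hgly : ∀ j, (aeval σ) (f j) ((aeval σ) (g j) (β j)) = 0 := by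
    intro j
    rw [← hmulact, hfg j, ← hfact]
    exact hannXn (β j)
  have hγne : (∀ i, β i ≠ 0) → ∀ j, (aeval σ) (g j) (β j) ≠ 0 := by
    intro hβ j h0
    exact hndvd j (annih j (β j) (hβ j) (by rw [← circ_eq]; exact hker j) (g j) h0)
  constructor
  · -- normal → all components nonzero
    intro hN j
    by_contra h0
    have hβj : β j = 0 := h0
    have hB0 : (aeval σ) (g j) (∑ i, β i) = 0 := by
      rw [hgβ j, hβj, map_zero]
    have hLI := Fintype.linearIndependent_iff.mp hN.1
    have h1 : (aeval σ) (g j) = ∑ i ∈ Finset.range n, (g j).coeff i • σ ^ i :=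
      aeval_eq_sum_range' (hdegg j) σ
    have hsum : ∑ i : Fin n, (g j).coeff (i : ℕ) • (∑ k, β k) ^ q ^ (i : ℕ) = 0 := by
      rw [Fin.sum_univ_eq_sum_range (fun i => (g j).coeff i • (∑ k, β k) ^ q ^ i) n]
      calc ∑ i ∈ Finset.range n, (g j).coeff i • (∑ k, β k) ^ q ^ i
          = (∑ i ∈ Finset.range n, (g j).coeff i • σ ^ i) (∑ k, β k) := by
            rw [LinearMap.sum_apply]
            exact Finset.sum_congr rfl fun i _ => by rw [LinearMap.smul_apply, hpow]
        _ = 0 := by rw [← h1, hB0]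
    have := hLI _ hsum ⟨(g j).natDegree, hdegg j⟩
    simp only at this
    rw [(hgmonic j).coeff_natDegree] at this
    exact one_ne_zero this
  · -- all components nonzero → normal
    intro hβ
    have hne : Nonempty (Fin n) := ⟨⟨0, hn⟩⟩
    have hLI : LinearIndependent Fq (fun i : Fin n => (∑ k, β k) ^ q ^ (i : ℕ)) := by
      rw [Fintype.linearIndependent_iff]
      intro v hv
      set B : Fq[X] := ∑ k : Fin n, C (v k) * X ^ (k : ℕ) with hB
      have hBann : (aeval σ) B (∑ i, β i) = 0 := by
        rw [hB, map_sum (aeval σ) (fun k : Fin n => C (v k) * X ^ (k : ℕ)) Finset.univ]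
        simp only [LinearMap.coe_sum, Finset.sum_apply, map_mul, map_pow,
          aeval_X, aeval_C, Module.End.mul_apply, Module.algebraMap_end_apply, hpow]
        exact hv
      have hdvd : ∀ j, f j ∣ B := by
        intro j
        refine annih j _ (hγne hβ j) (hgly j) B ?_
        rw [← hgβ j, ← hmulact, mul_comm, hmulact, hBann, map_zero]
      have hprodd : (∏ i, f i) ∣ B :=
        Finset.prod_dvd_of_coprime (fun i _ j hj hij => hcopr i j hij) fun j _ => hdvd j
      have hBdeg : B.degree < ((X : Fq[X]) ^ n - 1).degree := by
        rw [hdegXn, hB]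
        refine lt_of_le_of_lt (degree_sum_le _ _) ?_
        rw [Finset.sup_lt_iff (by exact_mod_cast WithBot.bot_lt_coe n)]
        intro k _
        refine lt_of_le_of_lt (degree_C_mul_X_pow_le _ _) ?_
        exact_mod_cast Nat.cast_lt.mpr k.isLt
      have hB0 : B = 0 := eq_zero_of_dvd_of_degree_lt (hfact ▸ hprodd) hBdeg
      intro i
      have hci : B.coeff (i : ℕ) = v i := by
        rw [hB, finset_sum_coeff]
        rw [Finset.sum_eq_single i]
        · simp [coeff_C_mul, coeff_X_pow]
        · intro k _ hk
          rw [coeff_C_mul, coeff_X_pow, if_neg (fun h => hk (Fin.val_inj.mp h.symm)), mul_zero]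
        · intro h; exact absurd (Finset.mem_univ i) h
      rw [← hci, hB0, coeff_zero]
    exact ⟨hLI, hLI.span_eq_top_of_card_eq_finrank (by simp [hrank])⟩
end

section
/- In F_q[x], one has (1 + x + ⋯ + x^{n−1}) ≡ (n/τ)·(x − 1)^{τ−1} (mod (x−1)^τ), where τ = p^{v_p(n)} and q is a power of p. -/
open Polynomial

variable {Fq Fqn : Type*}

lemma aux_cast_pow {F : Type*} [CommRing F] (p : ℕ) [hp : Fact p.Prime] [CharP F p]
    (k v : ℕ) : (k : F) ^ p ^ v = (k : F) := by
  induction v with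
  | zero => simp
  | succ w ih => rw [pow_succ, pow_mul, ih, ← frobenius_def, map_natCast]

theorem stmt11 (p m q n : ℕ) [Field Fq] [Fintype Fq]
    (hp : p.Prime) (hm : 0 < m) (hpq : q = p ^ m) [CharP Fq p]
    (hcard : Fintype.card Fq = q) (hn : 0 < n) :
    ((X : Fq[X]) - 1) ^ p ^ padicValNat p n ∣
      (∑ i ∈ Finset.range n, (X : Fq[X]) ^ i) -
        C ((n / p ^ padicValNat p n : ℕ) : Fq) * ((X : Fq[X]) - 1) ^ (p ^ padicValNat p n - 1) := by
  haveI := Fact.mk hp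
  set v := padicValNat p n with hv
  set τ := p ^ v with hτdef
  have hτpos : 0 < τ := pow_pos hp.pos v
  obtain ⟨k, hk⟩ : τ ∣ n := by rw [hτdef, hv]; exact pow_padicValNat_dvd
  have hkval : n / τ = k := by rw [hk, Nat.mul_div_cancel_left k hτpos]
  have hX1 : (X - 1 : Fq[X]) ≠ 0 := by
    have := X_sub_C_ne_zero (1 : Fq)
    simpa using this
  set T : Fq[X] := ∑ i ∈ Finset.range k, X ^ i with hT
  have key : (X - 1 : Fq[X]) * (∑ i ∈ Finset.range n, X ^ i)
      = (X - 1) * ((X - 1) ^ (τ - 1) * T ^ τ) := by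
    have h1 : (∑ i ∈ Finset.range n, (X:Fq[X]) ^ i) * (X - 1) = X ^ n - 1 := geom_sum_mul X n
    have h2 : T * (X - 1) = X ^ k - 1 := geom_sum_mul X k
    have hchar : ((X:Fq[X]) ^ k - 1) ^ τ = X ^ n - 1 := by
      rw [hτdef, sub_pow_char_pow, one_pow, ← pow_mul, hk, Nat.mul_comm]
    calc (X - 1 : Fq[X]) * (∑ i ∈ Finset.range n, X ^ i)
        = X ^ n - 1 := by rw [mul_comm, h1]
      _ = (T * (X - 1)) ^ τ := by rw [h2, hchar]
      _ = (X - 1) ^ τ * T ^ τ := by rw [mul_pow, mul_comm]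
      _ = (X - 1) * ((X - 1) ^ (τ - 1) * T ^ τ) := by
          rw [← mul_assoc, ← pow_succ', Nat.sub_add_cancel hτpos]
  have hS : (∑ i ∈ Finset.range n, (X:Fq[X]) ^ i) = (X - 1) ^ (τ - 1) * T ^ τ :=
    mul_left_cancel₀ hX1 key
  have hdvd2 : (X - 1 : Fq[X]) ∣ T ^ τ - C ((k : ℕ) : Fq) := by
    have : (X - C (1:Fq)) ∣ T ^ τ - C ((k : ℕ) : Fq) := by
      rw [dvd_iff_isRoot]
      simp only [IsRoot, eval_sub, eval_pow, eval_C, hT, eval_finset_sum, eval_pow, eval_X,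
        one_pow, Finset.sum_const, Finset.card_range, nsmul_eq_mul, mul_one]
      rw [hτdef, aux_cast_pow, sub_self]
    simpa using this
  have hτsplit : ((X:Fq[X]) - 1) ^ τ = (X - 1) ^ (τ - 1) * (X - 1) := by
    rw [← pow_succ, Nat.sub_add_cancel hτpos]
  rw [hkval, hS, hτsplit]
  have heq : (X - 1 : Fq[X]) ^ (τ - 1) * T ^ τ - C ((k:ℕ):Fq) * (X - 1) ^ (τ - 1)
      = (X - 1) ^ (τ - 1) * (T ^ τ - C ((k:ℕ):Fq)) := by ring
  rw [heq]
  exact mul_dvd_mul_left _ hdvd2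
end

section
/- Let α be a normal element of F_{q^n}. An element β = g ∘ α has normal α-depth b if and only if gcd(x^n − 1, g(x) − c) = 1 for all c ∈ {0, 1, ..., b−1} (interpreted in F_q). -/
open Polynomial

variable {Fq Fqn : Type*}

section Aux
variable [Field Fq] [Fintype Fq] [Field Fqn] [Algebra Fq Fqn]

theorem aux_main (p m q n : ℕ)
    (hp : p.Prime) (hm : 0 < m) (hpq : q = p ^ m) (hcard : Fintype.card Fq = q)
    (hn : 0 < n) (hrank : Module.finrank Fq Fqn = n)
    (α : Fqn) (hα : IsNormal Fq q n α) (g : Fq[X]) (c : ℕ) :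
    IsNormal Fq q n (circ q g α - c • α) ↔
      IsCoprime ((X : Fq[X]) ^ n - 1) (g - C ((c : ℕ) : Fq)) := by
  classical
  -- characteristic
  have hcharFq : CharP Fq p := by
    obtain ⟨k, hr, hk⟩ := FiniteField.card Fq (ringChar Fq)
    have hpr : p = ringChar Fq := by
      have hdvd : p ∣ ringChar Fq ^ (k : ℕ) := by
        rw [← hk, hcard, hpq]; exact dvd_pow_self p hm.ne'
      exact (Nat.prime_dvd_prime_iff_eq hp hr).mp (hp.dvd_of_dvd_pow hdvd)
    rw [hpr]; exact ringChar.charP Fq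
  have hcharFqn : CharP Fqn p :=
    charP_of_injective_algebraMap (algebraMap Fq Fqn).injective p
  have hfact : Fact p.Prime := ⟨hp⟩
  have hfd : FiniteDimensional Fq Fqn :=
    Module.finite_of_finrank_pos (by rw [hrank]; exact hn)
  -- Frobenius linear map
  have hfix : ∀ a : Fq, a ^ q = a := fun a => by rw [← hcard]; exact FiniteField.pow_card a
  let φ : Fqn →ₗ[Fq] Fqn :=
    { toFun := fun x => x ^ q
      map_add' := fun x y => by rw [hpq]; exact add_pow_char_pow x y p m
      map_smul' := fun a x => by
        simp only [Algebra.smul_def, mul_pow, RingHom.id_apply, ← map_pow, hfix] }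
  have hφpow : ∀ (i : ℕ) (x : Fqn), (φ ^ i) x = x ^ q ^ i := by
    intro i
    induction i with
    | zero => intro x; simp
    | succ i ih =>
      intro x
      rw [pow_succ', Module.End.mul_apply, ih]
      show (x ^ q ^ i) ^ q = _
      rw [← pow_mul, ← pow_succ]
  have hcirc : ∀ (h : Fq[X]) (x : Fqn), circ q h x = aeval φ h x := by
    intro h x
    rw [aeval_endomorphism]
    unfold circ Polynomial.sum
    refine Finset.sum_congr rfl fun i _ => ?_
    simp only [hφpow, Algebra.smul_def]
  -- x^(q^n) = x
  letI : Finite Fqn := Module.finite_of_finite Fq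
  letI : Fintype Fqn := Fintype.ofFinite Fqn
  have hcardn : Fintype.card Fqn = q ^ n := by
    rw [Module.card_eq_pow_finrank (K := Fq) (V := Fqn), hcard, hrank]
  have hXn : aeval φ ((X : Fq[X]) ^ n - 1) = 0 := by
    apply LinearMap.ext; intro x
    simp only [map_sub, map_pow, aeval_X, map_one, LinearMap.sub_apply, Module.End.one_apply,
      LinearMap.zero_apply, hφpow]
    rw [← hcardn, FiniteField.pow_card, sub_self]
  have hX1 : ((X : Fq[X]) ^ n - 1) ≠ 0 := by
    intro h0
    have hdeg := degree_X_pow_sub_C hn (1 : Fq)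
    rw [map_one, h0, degree_zero] at hdeg
    exact (by simp at hdeg)
  have hβeq : circ q g α - c • α = aeval φ (g - C ((c : ℕ) : Fq)) α := by
    rw [map_sub, LinearMap.sub_apply, ← hcirc, aeval_C, Module.algebraMap_end_apply,
      Nat.cast_smul_eq_nsmul]
  rw [hβeq]
  -- the general equivalence for an arbitrary polynomial f
  suffices H : ∀ f : Fq[X],
      IsNormal Fq q n (aeval φ f α) ↔ IsCoprime ((X : Fq[X]) ^ n - 1) f from H _
  intro f
  have hcomm : ∀ i : ℕ, (φ ^ i) ∘ₗ (aeval φ f) = (aeval φ f) ∘ₗ (φ ^ i) := by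
    intro i
    have h1 : (φ ^ i) * (aeval φ f) = aeval φ (X ^ i * f) := by
      rw [map_mul, map_pow, aeval_X]
    have h2 : (aeval φ f) * (φ ^ i) = aeval φ (f * X ^ i) := by
      rw [map_mul, map_pow, aeval_X]
    show (φ ^ i) * (aeval φ f) = (aeval φ f) * (φ ^ i)
    rw [h1, h2, mul_comm]
  have hβfam : (fun i : Fin n => (aeval φ f α) ^ q ^ (i : ℕ)) =
      (aeval φ f) ∘ (fun i : Fin n => α ^ q ^ (i : ℕ)) := by
    funext i
    show (aeval φ f α) ^ q ^ (i : ℕ) = aeval φ f (α ^ q ^ (i : ℕ))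
    rw [← hφpow, ← hφpow]
    calc (φ ^ (i : ℕ)) (aeval φ f α) = ((φ ^ (i : ℕ)) ∘ₗ (aeval φ f)) α := rfl
      _ = ((aeval φ f) ∘ₗ (φ ^ (i : ℕ))) α := by rw [hcomm]
      _ = _ := rfl
  constructor
  · -- normal → coprime
    intro hnorm
    by_contra hnc
    obtain ⟨d, h, f', hh, hf', hdunit, hd0⟩ :
        ∃ d h f' : Fq[X], (X : Fq[X]) ^ n - 1 = d * h ∧ f = d * f' ∧ ¬IsUnit d ∧ d ≠ 0 := by
      refine ⟨EuclideanDomain.gcd ((X : Fq[X]) ^ n - 1) f, _, _,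
        (EuclideanDomain.gcd_dvd_left _ _).choose_spec,
        (EuclideanDomain.gcd_dvd_right _ _).choose_spec,
        fun hu => hnc (EuclideanDomain.gcd_isUnit_iff.mp hu), fun h0 => ?_⟩
      exact hX1 (EuclideanDomain.gcd_eq_zero_iff.mp h0).1
    have hh0 : h ≠ 0 := by rintro rfl; rw [mul_zero] at hh; exact hX1 hh
    have hnd : d.natDegree + h.natDegree = n := by
      have h1 := natDegree_mul hd0 hh0
      rw [← hh] at h1
      have h2 : ((X : Fq[X]) ^ n - 1).natDegree = n := by
        have h3 := degree_X_pow_sub_C hn (1 : Fq)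
        rw [map_one] at h3
        exact natDegree_eq_of_degree_eq_some h3
      omega
    have hdpos : 0 < d.natDegree := by
      rcases Nat.eq_zero_or_pos d.natDegree with h0 | h0
      · exfalso
        apply hdunit
        rw [eq_C_of_natDegree_eq_zero h0]
        refine isUnit_C.mpr (IsUnit.mk0 _ fun hc0 => hd0 ?_)
        rw [eq_C_of_natDegree_eq_zero h0, hc0, map_zero]
      · exact h0
    have hdegh : h.degree < (n : WithBot ℕ) := by
      rw [degree_eq_natDegree hh0]
      exact_mod_cast (by omega : h.natDegree < n)
    have hann : aeval φ h (aeval φ f α) = 0 := by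
      have e1 : aeval φ h (aeval φ f α) = aeval φ (h * f) α := by rw [map_mul]; rfl
      have e2 : h * f = ((X : Fq[X]) ^ n - 1) * f' := by rw [hf', hh]; ring
      rw [e1, e2, map_mul, hXn, zero_mul, LinearMap.zero_apply]
    have hsum : ∑ i : Fin n, h.coeff (i : ℕ) • (aeval φ f α) ^ q ^ (i : ℕ) = 0 := by
      have hs := Polynomial.sum_fin (fun i a => a • ((φ ^ i) (aeval φ f α))) (by simp) hdegh
      have e3 : ∑ i : Fin n, h.coeff (i : ℕ) • (aeval φ f α) ^ q ^ (i : ℕ)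
          = ∑ i : Fin n, h.coeff (i : ℕ) • ((φ ^ (i : ℕ)) (aeval φ f α)) := by
        refine Finset.sum_congr rfl fun i _ => ?_
        rw [hφpow]
      rw [e3, hs, ← aeval_endomorphism, hann]
    have hli := (Fintype.linearIndependent_iff.mp hnorm.1) (fun i => h.coeff (i : ℕ)) hsum
    exact (Polynomial.leadingCoeff_ne_zero.mpr hh0) (hli ⟨h.natDegree, by omega⟩)
  · -- coprime → normal
    rintro ⟨u, v, huv⟩
    have hinv : (aeval φ v) ∘ₗ (aeval φ f) = LinearMap.id := by
      show (aeval φ v) * (aeval φ f) = 1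
      rw [← map_mul]
      have hvf : v * f = 1 - u * ((X : Fq[X]) ^ n - 1) := by linear_combination huv
      rw [hvf, map_sub, map_one, map_mul, hXn, mul_zero, sub_zero]
    have hinj : Function.Injective (aeval φ f) := by
      intro x y hxy
      have h1 := congrArg (aeval φ v) hxy
      calc x = ((aeval φ v) ∘ₗ (aeval φ f)) x := by rw [hinv]; rfl
        _ = ((aeval φ v) ∘ₗ (aeval φ f)) y := h1
        _ = y := by rw [hinv]; rfl
    have hsurj : Function.Surjective (aeval φ f) :=
      (LinearMap.injective_iff_surjective).mp hinj
    constructor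
    · rw [hβfam]
      exact hα.1.map' (aeval φ f) (LinearMap.ker_eq_bot.mpr hinj)
    · rw [hβfam, Set.range_comp, ← Submodule.map_span, hα.2, Submodule.map_top,
        LinearMap.range_eq_top.mpr hsurj]

end Aux

theorem stmt12 (p m q n b : ℕ) [Field Fq] [Fintype Fq] [Field Fqn] [Algebra Fq Fqn]
    (hp : p.Prime) (hm : 0 < m) (hpq : q = p ^ m) (hcard : Fintype.card Fq = q)
    (hn : 0 < n) (hrank : Module.finrank Fq Fqn = n) (hb : b ≤ p)
    (α : Fqn) (hα : IsNormal Fq q n α) (g : Fq[X]) :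
    (∀ c : ℕ, c < b → IsNormal Fq q n (circ q g α - c • α)) ↔
      (∀ c : ℕ, c < b → IsCoprime ((X : Fq[X]) ^ n - 1) (g - C ((c : ℕ) : Fq))) := by
  exact forall_congr' fun c => forall_congr' fun hc =>
    aux_main p m q n hp hm hpq hcard hn hrank α hα g c
end

section
/- Let q be a power of a prime p, suppose p divides n, and let α be a normal element of F_{q^n} over F_q. If β is a normal element of F_{q^n} over F_q, then β − c is also normal for every c ∈ F_q. -/
open Polynomial

variable {Fq Fqn : Type*}

theorem stmt13 (p m q n : ℕ) [Field Fq] [Fintype Fq] [Field Fqn] [Algebra Fq Fqn]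
    (hp : p.Prime) (hm : 0 < m) (hpq : q = p ^ m) (hcard : Fintype.card Fq = q)
    (hn : 0 < n) (hpn : p ∣ n) (hrank : Module.finrank Fq Fqn = n)
    (α : Fqn) (hα : IsNormal Fq q n α)
    (β : Fqn) (hβ : IsNormal Fq q n β) (c : Fq) :
    IsNormal Fq q n (β - algebraMap Fq Fqn c) := by
  haveI : NeZero n := ⟨hn.ne'⟩
  haveI : Nonempty (Fin n) := Fin.pos_iff_nonempty.mp hn
  haveI hfp : Fact p.Prime := ⟨hp⟩
  -- characteristic facts
  have hq0 : ((q : ℕ) : Fq) = 0 := by rw [← hcard]; exact FiniteField.cast_card_eq_zero Fq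
  have hp0 : ((p : ℕ) : Fq) = 0 := by
    have h : ((p : ℕ) : Fq) ^ m = 0 := by rw [← Nat.cast_pow, ← hpq]; exact hq0
    exact pow_eq_zero_iff hm.ne' |>.mp h
  have hrc : ringChar Fq = p := by
    have hd : ringChar Fq ∣ p := (CharP.cast_eq_zero_iff Fq (ringChar Fq) p).mp hp0
    rcases hp.eq_one_or_self_of_dvd _ hd with h1 | h2
    · exact absurd h1 (CharP.char_ne_one Fq (ringChar Fq))
    · exact h2
  haveI : CharP Fq p := hrc ▸ ringChar.charP Fq
  haveI : CharP Fqn p := charP_of_injective_algebraMap (algebraMap Fq Fqn).injective p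
  have hn0 : ((n : ℕ) : Fq) = 0 := by
    obtain ⟨k, rfl⟩ := hpn
    push_cast [hp0]; ring
  set c' : Fqn := algebraMap Fq Fqn c with hc'
  have hcq : ∀ a : Fq, a ^ q = a := fun a => hcard ▸ FiniteField.pow_card a
  set v : Fin n → Fqn := fun i : Fin n => β ^ q ^ (i : ℕ) with hv
  obtain ⟨hli, hsp⟩ := hβ
  -- basis, finiteness, and β ^ q ^ n = β
  let B : Module.Basis (Fin n) Fq Fqn := Module.Basis.mk hli hsp.ge
  haveI : Fintype Fqn := Module.fintypeOfFintype B
  have hcardn : Fintype.card Fqn = q ^ n := by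
    rw [Module.card_fintype B, hcard, Fintype.card_fin]
  have hβn : β ^ q ^ n = β := by rw [← hcardn]; exact FiniteField.pow_card β
  have hmul : ∀ k : ℕ, β ^ q ^ (n * k) = β := by
    intro k; induction k with
    | zero => simp
    | succ k ih => rw [Nat.mul_succ, pow_add, pow_mul, ih, hβn]
  have hmod : ∀ a : ℕ, β ^ q ^ a = β ^ q ^ (a % n) := by
    intro a
    conv_lhs => rw [← Nat.div_add_mod a n, pow_add, pow_mul, hmul]
  -- coordinates of c' in the basis of conjugates of β
  have hc'mem : c' ∈ Submodule.span Fq (Set.range v) := hsp ▸ Submodule.mem_top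
  obtain ⟨d, hd⟩ := (Submodule.mem_span_range_iff_exists_fun Fq).mp hc'mem
  -- the q-power Frobenius as an Fq-linear map
  let φ : Fqn →ₗ[Fq] Fqn :=
    { toFun := fun x => x ^ q
      map_add' := fun x y => by rw [hpq]; exact add_pow_char_pow x y p m
      map_smul' := fun a x => by
        simp only [RingHom.id_apply, Algebra.smul_def, mul_pow, ← map_pow, hcq a] }
  have hφv : ∀ j : Fin n, φ (v j) = v (j + 1) := by
    intro j
    show (β ^ q ^ (j : ℕ)) ^ q = β ^ q ^ ((j + 1 : Fin n) : ℕ)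
    have h1 : ((j + 1 : Fin n) : ℕ) = ((j : ℕ) + 1) % n := by
      rw [Fin.val_add, Fin.val_one']
      exact Nat.add_mod_mod _ _ _
    rw [← pow_mul, ← pow_succ, h1, ← hmod]
  have hφc : φ c' = c' := by
    show c' ^ q = c'
    rw [hc', ← map_pow, hcq]
  have hd2 : ∑ j, d j • v (j + 1) = c' := by
    have h := congrArg φ hd
    rw [map_sum] at h
    simp only [map_smul, hφv] at h
    rwa [hφc] at h
  have hd3 : ∑ j, d (j - 1) • v j = c' := by
    rw [← hd2]
    exact (Fintype.sum_equiv (Equiv.addRight (1 : Fin n)) _ _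
      (fun x => by simp)).symm
  have hshift : ∀ j : Fin n, d (j - 1) = d j := by
    have h0 : ∑ j, (d (j - 1) - d j) • v j = 0 := by
      simp only [sub_smul]
      rw [Finset.sum_sub_distrib, hd3, hd, sub_self]
    intro j
    exact sub_eq_zero.mp (Fintype.linearIndependent_iff.mp hli _ h0 j)
  have hsucc : ∀ j : Fin n, d (j + 1) = d j := fun j => by
    have h := hshift (j + 1); rw [add_sub_cancel_right] at h; exact h.symm
  have hconst : ∀ j : Fin n, d j = d 0 := by
    open Fin.NatCast in
    have key : ∀ k : ℕ, d (k : Fin n) = d 0 := by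
      intro k; induction k with
      | zero => simp
      | succ k ih =>
        rw [show ((k + 1 : ℕ) : Fin n) = (k : Fin n) + 1 by push_cast; ring, hsucc, ih]
    intro j
    have := key j.val
    rwa [Fin.cast_val_eq_self] at this
  have hdsum : ∑ j, d j = 0 := by
    rw [Finset.sum_congr rfl fun j _ => hconst j, Finset.sum_const, Finset.card_univ,
      Fintype.card_fin, nsmul_eq_mul, hn0, zero_mul]
  -- conjugates of β - c'
  have hwv : ∀ i : ℕ, (β - c') ^ q ^ i = β ^ q ^ i - c' := by
    intro i
    have h1 : (β - c') ^ q ^ i = β ^ q ^ i - c' ^ q ^ i := by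
      rw [hpq, ← pow_mul]
      rw [sub_pow_char_pow, pow_mul]
    have h2 : c' ^ q ^ i = c' := by
      have h3 : c ^ q ^ i = c := by rw [← hcard]; exact FiniteField.pow_card_pow i c
      rw [hc', ← map_pow, h3]
    rw [h1, h2]
  have hw : (fun i : Fin n => (β - c') ^ q ^ (i : ℕ)) = fun i : Fin n => v i - c' :=
    funext fun i => hwv i
  have hliw : LinearIndependent Fq fun i : Fin n => (β - c') ^ q ^ (i : ℕ) := by
    rw [hw, Fintype.linearIndependent_iff]
    intro a ha
    have hS : ∑ i, a i • v i = (∑ i, a i) • c' := by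
      have h : ∑ i, (a i • v i - a i • c') = 0 := by
        simpa [smul_sub] using ha
      rw [Finset.sum_sub_distrib, sub_eq_zero] at h
      rw [h, ← Finset.sum_smul]
    have hS2 : ∑ i, a i • v i = ∑ j, ((∑ i, a i) * d j) • v j := by
      rw [hS, ← hd, Finset.smul_sum]
      simp [smul_smul]
    have heq : ∀ j, a j = (∑ i, a i) * d j := by
      intro j
      have h0 : ∑ j, (a j - (∑ i, a i) * d j) • v j = 0 := by
        simp only [sub_smul]
        rw [Finset.sum_sub_distrib, hS2, sub_self]
      exact sub_eq_zero.mp (Fintype.linearIndependent_iff.mp hli _ h0 j)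
    have hSz : (∑ i, a i) = 0 := by
      calc (∑ i, a i) = ∑ j, (∑ i, a i) * d j := Finset.sum_congr rfl fun j _ => heq j
        _ = (∑ i, a i) * ∑ j, d j := (Finset.mul_sum _ _ _).symm
        _ = 0 := by rw [hdsum, mul_zero]
    intro i
    rw [heq i, hSz, zero_mul]
  exact ⟨hliw, hliw.span_eq_top_of_card_eq_finrank (by rw [Fintype.card_fin, hrank])⟩
end

section
/- Suppose gcd(p, n) = 1, let α be a normal element of F_{q^n} with Tr(α) = n (nonzero in F_q), and let β = g ∘ α be normal. Then for c ∈ F_q, the element β − c is normal if and only if g(1) ≠ c. -/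
open Polynomial

variable {Fq Fqn : Type*}

theorem stmt14 (p m q n : ℕ) [Field Fq] [Fintype Fq] [Field Fqn] [Algebra Fq Fqn]
    (hp : p.Prime) (hm : 0 < m) (hpq : q = p ^ m) (hcard : Fintype.card Fq = q)
    (hn : 0 < n) (hcop : Nat.Coprime p n) (hrank : Module.finrank Fq Fqn = n)
    (α : Fqn) (hα : IsNormal Fq q n α) (htr : Algebra.trace Fq Fqn α = (n : Fq))
    (g : Fq[X]) (hβ : IsNormal Fq q n (circ q g α)) (c : Fq) :
    IsNormal Fq q n (circ q g α - algebraMap Fq Fqn c) ↔ g.eval 1 ≠ c := by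
  haveI : Fact p.Prime := ⟨hp⟩
  haveI : Nonempty (Fin n) := ⟨⟨0, hn⟩⟩
  -- characteristic
  have hp0 : (p : Fq) = 0 := by
    have h := FiniteField.cast_card_eq_zero Fq
    rw [hcard, hpq] at h
    push_cast at h
    exact pow_eq_zero_iff hm.ne' |>.mp h
  haveI : CharP Fq p := by
    rcases CharP.exists Fq with ⟨r, hr⟩
    haveI := hr
    have : (r : ℕ) ∣ p := (CharP.cast_eq_zero_iff Fq r p).mp hp0
    have hrne : r ≠ 0 := by
      rintro rfl
      simp [Nat.zero_dvd] at this
      exact hp.ne_zero this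
    rcases (Nat.Prime.eq_one_or_self_of_dvd hp r this) with h1 | h2
    · exfalso
      have := CharP.char_ne_one Fq r
      exact this h1
    · rwa [h2] at hr
  haveI : CharP Fqn p := charP_of_injective_algebraMap (algebraMap Fq Fqn).injective p
  haveI : FiniteDimensional Fq Fqn := FiniteDimensional.of_finrank_pos (hrank ▸ hn)
  haveI : Finite Fqn := Module.finite_of_finite Fq
  haveI : Fintype Fqn := Fintype.ofFinite Fqn
  -- Frobenius as an AlgEquiv
  have hcommutes : ∀ a : Fq, (algebraMap Fq Fqn a) ^ q = algebraMap Fq Fqn a := by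
    intro a
    rw [← map_pow]
    congr 1
    rw [← hcard]
    exact FiniteField.pow_card a
  let σa : Fqn →ₐ[Fq] Fqn :=
    { toRingHom := iterateFrobenius Fqn p m
      commutes' := fun a => by
        show iterateFrobenius Fqn p m (algebraMap Fq Fqn a) = algebraMap Fq Fqn a
        rw [iterateFrobenius_def, ← hpq]; exact hcommutes a }
  let σ : Fqn ≃ₐ[Fq] Fqn :=
    AlgEquiv.ofBijective σa (Finite.injective_iff_bijective.mp σa.toRingHom.injective)
  have hσ : ∀ x : Fqn, σ x = x ^ q := by
    intro x
    show iterateFrobenius Fqn p m x = x ^ q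
    rw [iterateFrobenius_def, ← hpq]
  have hσpow : ∀ (i : ℕ) (x : Fqn), (σ ^ i) x = x ^ q ^ i := by
    intro i
    induction i with
    | zero => intro x; simp
    | succ k ih =>
      intro x
      rw [pow_succ', AlgEquiv.mul_apply, ih x, hσ, ← pow_mul, ← pow_succ]
  -- powers of σ enumerate the Galois group
  have hinj : Function.Injective (fun i : Fin n => σ ^ (i : ℕ)) := by
    intro i j hij
    apply hα.1.injective
    simp only [← hσpow i α, ← hσpow j α, hij]
  have hbij : Function.Bijective (fun i : Fin n => σ ^ (i : ℕ)) := by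
    rw [Fintype.bijective_iff_injective_and_card]
    exact ⟨hinj, by rw [Fintype.card_fin, ← Nat.card_eq_fintype_card, IsGalois.card_aut_eq_finrank, hrank]⟩
  -- trace formula
  have htrace : ∀ x : Fqn,
      algebraMap Fq Fqn (Algebra.trace Fq Fqn x) = ∑ i : Fin n, x ^ q ^ (i : ℕ) := by
    intro x
    rw [trace_eq_sum_automorphisms]
    exact (Fintype.sum_bijective _ hbij (fun i => x ^ q ^ (i : ℕ)) (fun τ => τ x)
      (fun i => (hσpow i x).symm)).symm
  -- trace invariance under conjugation
  have htrinv : ∀ (τ : Fqn ≃ₐ[Fq] Fqn) (x : Fqn),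
      Algebra.trace Fq Fqn (τ x) = Algebra.trace Fq Fqn x := by
    intro τ x
    apply (algebraMap Fq Fqn).injective
    rw [trace_eq_sum_automorphisms, trace_eq_sum_automorphisms]
    exact Fintype.sum_equiv (Equiv.mulRight τ) _ _ (fun ρ => by
      simp [AlgEquiv.mul_apply])
  have htrconj : ∀ (i : ℕ) (x : Fqn),
      Algebra.trace Fq Fqn (x ^ q ^ i) = Algebra.trace Fq Fqn x := by
    intro i x
    rw [← hσpow i x]
    exact htrinv (σ ^ i) x
  -- n ≠ 0 in Fq
  have hnne : (n : Fq) ≠ 0 := by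
    intro h
    have hdvd := (CharP.cast_eq_zero_iff Fq p n).mp h
    have : p ∣ Nat.gcd p n := Nat.dvd_gcd dvd_rfl hdvd
    rw [hcop] at this
    exact hp.one_lt.ne' (Nat.dvd_one.mp this)
  set β := circ q g α with hβdef
  set w := algebraMap Fq Fqn c with hwdef
  -- trace of β
  have htrβ : Algebra.trace Fq Fqn β = g.eval 1 * n := by
    rw [hβdef, circ, Polynomial.sum, map_sum]
    have : ∀ i ∈ g.support, Algebra.trace Fq Fqn (algebraMap Fq Fqn (g.coeff i) * α ^ q ^ i)
        = g.coeff i * (n : Fq) := by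
      intro i _
      rw [← Algebra.smul_def, map_smul, smul_eq_mul, htrconj, htr]
    rw [Finset.sum_congr rfl this, ← Finset.sum_mul]
    congr 1
    rw [Polynomial.eval_eq_sum, Polynomial.sum]
    simp
  -- trace of β is nonzero
  have htrβne : Algebra.trace Fq Fqn β ≠ 0 := by
    intro h
    have h2 : ∑ i : Fin n, (1 : Fq) • β ^ q ^ (i : ℕ) = 0 := by
      simp only [one_smul]
      rw [← htrace β, h, map_zero]
    exact one_ne_zero (Fintype.linearIndependent_iff.mp hβ.1 (fun _ => (1 : Fq)) h2 ⟨0, hn⟩)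
  have hg1n : g.eval 1 * (n : Fq) ≠ 0 := htrβ ▸ htrβne
  -- basis of conjugates of β
  let b : Module.Basis (Fin n) Fq Fqn := Module.Basis.mk hβ.1 hβ.2.ge
  have hb : ∀ i : Fin n, b i = β ^ q ^ (i : ℕ) := fun i => Module.Basis.mk_apply _ _ _
  set s := ∑ i : Fin n, b.repr w i with hsdef
  have hw : ∑ i : Fin n, b.repr w i • β ^ q ^ (i : ℕ) = w := by
    conv_rhs => rw [← b.sum_repr w]
    exact Finset.sum_congr rfl fun i _ => by rw [hb]
  -- compute s
  have hseq : s * (g.eval 1 * (n : Fq)) = (n : Fq) * c := by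
    have h1 : Algebra.trace Fq Fqn w = (n : Fq) * c := by
      rw [hwdef, Algebra.trace_algebraMap, hrank, nsmul_eq_mul]
    have h2 : Algebra.trace Fq Fqn w = s * (g.eval 1 * (n : Fq)) := by
      conv_lhs => rw [← hw]
      rw [map_sum, hsdef, Finset.sum_mul]
      exact Finset.sum_congr rfl fun i _ => by
        rw [map_smul, smul_eq_mul, htrconj, htrβ]
    rw [← h2, h1]
  have hkey : s = 1 ↔ g.eval 1 = c := by
    constructor
    · intro h
      rw [h, one_mul] at hseq
      have : (n : Fq) * g.eval 1 = (n : Fq) * c := by rw [← hseq]; ring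
      exact mul_left_cancel₀ hnne this
    · intro h
      rw [h] at hseq hg1n
      have : s * (c * (n : Fq)) = 1 * (c * (n : Fq)) := by rw [one_mul, hseq]; ring
      exact mul_right_cancel₀ hg1n this
  -- conjugates of β - w
  have hγconj : ∀ i : Fin n, (β - w) ^ q ^ (i : ℕ) = β ^ q ^ (i : ℕ) - w := by
    intro i
    rw [← hσpow, map_sub, hσpow, hwdef, AlgEquiv.commutes]
  -- linear independence criterion
  have hLI : LinearIndependent Fq (fun i : Fin n => (β - w) ^ q ^ (i : ℕ)) ↔ s ≠ 1 := by
    simp only [hγconj]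
    constructor
    · intro h hs1
      have h0 : ∑ i : Fin n, b.repr w i • (β ^ q ^ (i : ℕ) - w) = 0 := by
        simp only [smul_sub, Finset.sum_sub_distrib, hw, ← Finset.sum_smul, ← hsdef, hs1,
          one_smul, sub_self]
      have := Fintype.linearIndependent_iff.mp h _ h0
      have hs0 : s = 0 := by
        rw [hsdef]
        exact Finset.sum_eq_zero fun i _ => this i
      rw [hs1] at hs0
      exact one_ne_zero hs0
    · intro hs1
      rw [Fintype.linearIndependent_iff]
      intro a ha
      have hsum : ∑ i : Fin n, a i • β ^ q ^ (i : ℕ) = (∑ i : Fin n, a i) • w := by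
        have h' := ha
        simp only [smul_sub, Finset.sum_sub_distrib, sub_eq_zero] at h'
        rw [h', Finset.sum_smul]
      have hsum2 : ∑ i : Fin n, (a i - (∑ k : Fin n, a k) * b.repr w i) • β ^ q ^ (i : ℕ) = 0 := by
        simp only [sub_smul, Finset.sum_sub_distrib, hsum, mul_smul, ← Finset.smul_sum, hw,
          sub_self]
      have hcoef := Fintype.linearIndependent_iff.mp hβ.1 _ hsum2
      have key : ∀ j, a j = (∑ k : Fin n, a k) * b.repr w j := fun j =>
        sub_eq_zero.mp (hcoef j)
      have hA : (∑ k : Fin n, a k) = 0 := by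
        by_contra hA
        have : (∑ k : Fin n, a k) = (∑ k : Fin n, a k) * s := by
          conv_lhs => rw [Finset.sum_congr rfl fun j _ => key j]
          rw [hsdef, Finset.mul_sum]
        have h1s : (∑ k : Fin n, a k) * 1 = (∑ k : Fin n, a k) * s := by
          rw [mul_one]; exact this
        exact hs1 (mul_left_cancel₀ hA h1s).symm
      intro i
      rw [key i, hA, zero_mul]
  constructor
  · intro hNorm h
    exact (hLI.mp hNorm.1) (hkey.mpr h)
  · intro h
    have hli := hLI.mpr (fun hs1 => h (hkey.mp hs1))
    exact ⟨hli, hli.span_eq_top_of_card_eq_finrank (by rw [Fintype.card_fin, hrank])⟩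
end

section
/- Let α be normal in F_{q^n}, β = g ∘ α, and x^n − 1 = f_1^τ ⋯ f_r^τ with f_i distinct irreducibles. Then β is (α, b)-sociable if and only if gcd(x^n − 1, g(x) − c·x^j) = 1 for all j ∈ {0, ..., n−1} and all c ∈ {0, ..., b−1}. -/
open Polynomial

variable {Fq Fqn : Type*}

/-- If `F ∣ A - B` then coprimality with `A` and with `B` agree. -/
lemma isCoprime_congr_of_dvd_sub {R : Type*} [CommRing R] {F A B : R} (h : F ∣ A - B) :
    IsCoprime F A ↔ IsCoprime F B := by
  obtain ⟨k, hk⟩ := h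
  have hA : A = B + F * k := by linear_combination hk
  rw [hA, IsCoprime.add_mul_left_right_iff]

/-- Existence of the `q`-power Frobenius as an `Fq`-linear endomorphism of `Fqn`. -/
lemma exists_frob [Field Fq] [Fintype Fq] [Field Fqn] [Algebra Fq Fqn]
    (p m q : ℕ) (hp : p.Prime) (hm : 0 < m) (hpq : q = p ^ m) (hcard : Fintype.card Fq = q) :
    ∃ φ : Fqn →ₗ[Fq] Fqn, ∀ v, φ v = v ^ q := by
  obtain ⟨q0, hq0⟩ := CharP.exists Fq
  haveI := hq0
  have hq0p : q0.Prime := CharP.char_is_prime Fq q0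
  obtain ⟨k, -, hcard'⟩ := FiniteField.card Fq q0
  have hq0eq : q0 = p := by
    have hdvd : q0 ∣ p ^ m := by
      rw [← hpq, ← hcard, hcard']
      exact dvd_pow_self q0 (by exact_mod_cast k.ne_zero)
    exact (Nat.prime_dvd_prime_iff_eq hq0p hp).mp (hq0p.dvd_of_dvd_pow hdvd)
  subst hq0eq
  haveI : Fact q0.Prime := ⟨hq0p⟩
  haveI : CharP Fqn q0 := charP_of_injective_algebraMap (algebraMap Fq Fqn).injective q0
  refine ⟨{ toFun := fun v => v ^ q, map_add' := fun v w => ?_, map_smul' := fun a v => ?_ },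
    fun v => rfl⟩
  · rw [hpq]; exact add_pow_char_pow v w q0 m
  · simp only [RingHom.id_apply, Algebra.smul_def, mul_pow, ← map_pow]
    rw [show a ^ q = a from hcard ▸ FiniteField.pow_card a]

theorem stmt15 (p m q n b : ℕ) [Field Fq] [Fintype Fq] [Field Fqn] [Algebra Fq Fqn]
    (hp : p.Prime) (hm : 0 < m) (hpq : q = p ^ m) (hcard : Fintype.card Fq = q)
    (hn : 0 < n) (hrank : Module.finrank Fq Fqn = n) (hb : b ≤ p)
    (r : ℕ) (f : Fin r → Fq[X]) (hirr : ∀ i, Irreducible (f i))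
    (hmonic : ∀ i, (f i).Monic) (hinj : Function.Injective f)
    (hfact : (X : Fq[X]) ^ n - 1 = ∏ i, f i ^ p ^ padicValNat p n)
    (α : Fqn) (hα : IsNormal Fq q n α) (g : Fq[X]) :
    (∀ i : ℕ, i < n → ∀ c : ℕ, c < b → IsNormal Fq q n ((circ q g α) ^ q ^ i - c • α)) ↔
      (∀ j : ℕ, j < n → ∀ c : ℕ, c < b →
        IsCoprime ((X : Fq[X]) ^ n - 1) (g - C ((c : ℕ) : Fq) * X ^ j)) := by
  classical
  obtain ⟨φ, hφ⟩ := exists_frob (Fq := Fq) (Fqn := Fqn) p m q hp hm hpq hcard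
  have hpow : ∀ (v : Fqn) (i : ℕ), (φ ^ i) v = v ^ q ^ i := by
    intro v i
    induction i generalizing v with
    | zero => simp
    | succ i ih =>
      rw [pow_succ', Module.End.mul_apply, ih, hφ, ← pow_mul, ← pow_succ]
  have hcirc : ∀ (h : Fq[X]) (v : Fqn), circ q h v = aeval φ h v := by
    intro h v
    rw [aeval_endomorphism, circ, Polynomial.sum, Polynomial.sum]
    exact Finset.sum_congr rfl fun i _ => by rw [hpow, Algebra.smul_def]
  haveI : FiniteDimensional Fq Fqn := .of_finrank_pos (hrank ▸ hn)
  haveI : Finite Fqn := Module.finite_of_finite Fq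
  haveI : Fintype Fqn := Fintype.ofFinite Fqn
  have hcardn : Fintype.card Fqn = q ^ n := by
    rw [Module.card_eq_pow_finrank (K := Fq), hcard, hrank]
  have hφn : φ ^ n = 1 := by
    ext v
    rw [hpow, Module.End.one_apply, ← hcardn, FiniteField.pow_card]
  have haevalF : aeval φ ((X : Fq[X]) ^ n - 1) = 0 := by
    rw [map_sub, map_one, aeval_X_pow, hφn, sub_self]
  -- key equivalence: normality of `aeval φ h α` ↔ coprimality of `h` with `X^n - 1`
  have key : ∀ h : Fq[X],
      IsNormal Fq q n (aeval φ h α) ↔ IsCoprime ((X : Fq[X]) ^ n - 1) h := by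
    intro h
    set β := aeval φ h α with hβ
    have hfam : (fun i : Fin n => β ^ q ^ (i : ℕ)) = fun i : Fin n => (φ ^ (i : ℕ)) β := by
      funext i; rw [hpow]
    have hFne : ((X : Fq[X]) ^ n - 1) ≠ 0 := by
      intro h0
      have : ((X : Fq[X]) ^ n - 1).natDegree = n := by
        simpa using natDegree_X_pow_sub_C (n := n) (r := (1 : Fq))
      rw [h0, natDegree_zero] at this
      omega
    constructor
    · rintro ⟨hli, -⟩
      rw [hfam] at hli
      by_contra hcop
      set d := EuclideanDomain.gcd ((X : Fq[X]) ^ n - 1) h with hd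
      have hdunit : ¬ IsUnit d := fun hu => hcop (EuclideanDomain.gcd_isUnit_iff.mp hu)
      obtain ⟨w, hw⟩ := EuclideanDomain.gcd_dvd_left ((X : Fq[X]) ^ n - 1) h
      obtain ⟨h', hh'⟩ := EuclideanDomain.gcd_dvd_right ((X : Fq[X]) ^ n - 1) h
      have hdne : d ≠ 0 := fun h0 => hFne (by rw [hw, ← hd, h0, zero_mul])
      have hwne : w ≠ 0 := fun h0 => hFne (by rw [hw, h0, mul_zero])
      have hdegw : w.natDegree < n := by
        have hdegF : ((X : Fq[X]) ^ n - 1).natDegree = n := by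
          simpa using natDegree_X_pow_sub_C (n := n) (r := (1 : Fq))
        have hsum : d.natDegree + w.natDegree = n := by
          rw [← natDegree_mul hdne hwne, ← hw, hdegF]
        have hd1 : 0 < d.natDegree := by
          rcases Nat.eq_zero_or_pos d.natDegree with h0 | h0
          · refine absurd ?_ hdunit
            rw [eq_C_of_natDegree_eq_zero h0]
            exact isUnit_C.mpr (isUnit_iff_ne_zero.mpr
              (fun hc => hdne (by rw [eq_C_of_natDegree_eq_zero h0, hc, map_zero])))
          · exact h0
        omega
      have hdvd : ((X : Fq[X]) ^ n - 1) ∣ w * h :=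
        ⟨h', by linear_combination w * hh' - h' * hw⟩
      have h0 : aeval φ w β = 0 := by
        obtain ⟨k, hk⟩ := hdvd
        rw [hβ, ← Module.End.mul_apply, ← map_mul, hk, map_mul, haevalF, zero_mul,
          LinearMap.zero_apply]
      have hsum0 : ∑ i : Fin n, w.coeff (i : ℕ) • (φ ^ (i : ℕ)) β = 0 := by
        rw [← h0, aeval_eq_sum_range' hdegw, ← Fin.sum_univ_eq_sum_range
          (fun i => w.coeff i • φ ^ i) n, LinearMap.sum_apply]
        exact Finset.sum_congr rfl fun i _ => by rw [LinearMap.smul_apply]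
      have hc0 := Fintype.linearIndependent_iff.mp hli (fun i => w.coeff (i : ℕ)) hsum0
      apply hwne
      ext i
      rcases lt_or_ge i n with hi | hi
      · simpa using hc0 ⟨i, hi⟩
      · simp [coeff_eq_zero_of_natDegree_lt (lt_of_lt_of_le hdegw hi)]
    · intro hcop
      obtain ⟨u, v, huv⟩ := hcop
      have hα' : aeval φ v β = α := by
        have h1 : aeval φ (u * ((X : Fq[X]) ^ n - 1) + v * h) α = α := by
          rw [huv, map_one, Module.End.one_apply]
        rw [map_add, map_mul, map_mul, haevalF, mul_zero, zero_add, Module.End.mul_apply] at h1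
        exact h1
      set S := Submodule.span Fq (Set.range fun i : Fin n => (φ ^ (i : ℕ)) β) with hS
      have hmem : ∀ i : ℕ, (φ ^ i) β ∈ S := by
        intro i
        have heq : (φ ^ i) β = (φ ^ (i % n)) β := by
          conv_lhs => rw [← Nat.div_add_mod i n, pow_add, pow_mul, hφn, one_pow, one_mul]
        rw [heq]
        exact Submodule.subset_span ⟨⟨i % n, Nat.mod_lt _ hn⟩, rfl⟩
      have haev : ∀ w : Fq[X], aeval φ w β ∈ S := by
        intro w
        rw [aeval_endomorphism, Polynomial.sum]
        exact Submodule.sum_mem _ fun k _ => Submodule.smul_mem _ _ (hmem k)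
      have htop : (⊤ : Submodule Fq Fqn) ≤ S := by
        rw [← hα.2, Submodule.span_le]
        rintro x ⟨i, rfl⟩
        show α ^ q ^ (i : ℕ) ∈ S
        have heq : α ^ q ^ (i : ℕ) = aeval φ ((X : Fq[X]) ^ (i : ℕ) * v) β := by
          rw [map_mul, aeval_X_pow, Module.End.mul_apply, hα', hpow]
        rw [heq]
        exact haev _
      have hli : LinearIndependent Fq (fun i : Fin n => (φ ^ (i : ℕ)) β) :=
        linearIndependent_of_top_le_span_of_card_eq_finrank htop (by simp [hrank])
      refine ⟨by rw [hfam]; exact hli, ?_⟩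
      have hr : (Set.range fun i : Fin n => β ^ q ^ (i : ℕ))
          = Set.range fun i : Fin n => (φ ^ (i : ℕ)) β := by rw [hfam]
      rw [hr]
      exact le_antisymm le_top htop
  -- rewrite conjugates in `aeval` form
  have hβc : ∀ i c : ℕ, (circ q g α) ^ q ^ i - c • α
      = aeval φ ((X : Fq[X]) ^ i * g - C ((c : ℕ) : Fq)) α := by
    intro i c
    rw [map_sub, map_mul, aeval_X_pow, aeval_C, LinearMap.sub_apply, Module.End.mul_apply,
      Module.algebraMap_end_apply, hcirc, ← hpow, Nat.cast_smul_eq_nsmul]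
  -- coprimality with powers of X
  have hcopX : IsCoprime ((X : Fq[X]) ^ n - 1) (X : Fq[X]) := by
    refine ⟨-1, X ^ (n - 1), ?_⟩
    have h1 : (X : Fq[X]) ^ (n - 1) * X = X ^ n := by
      rw [← pow_succ, Nat.sub_add_cancel hn]
    linear_combination h1
  have hshift : ∀ (i j : ℕ) (c' : Fq), (i + j) % n = 0 →
      (IsCoprime ((X : Fq[X]) ^ n - 1) (X ^ i * g - C c') ↔
        IsCoprime ((X : Fq[X]) ^ n - 1) (g - C c' * X ^ j)) := by
    intro i j c' hmod
    have h1 : IsCoprime ((X : Fq[X]) ^ n - 1) (X ^ i * g - C c') ↔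
        IsCoprime ((X : Fq[X]) ^ n - 1) (X ^ j * (X ^ i * g - C c')) :=
      ⟨fun hh => (hcopX.pow_right).mul_right hh, fun hh => hh.of_mul_right_right⟩
    have h2 : ((X : Fq[X]) ^ n - 1) ∣ X ^ j * (X ^ i * g - C c') - (g - C c' * X ^ j) := by
      have heq : (X : Fq[X]) ^ j * (X ^ i * g - C c') - (g - C c' * X ^ j)
          = ((X : Fq[X]) ^ (i + j) - 1) * g := by ring
      rw [heq]
      obtain ⟨k, hk⟩ := Nat.dvd_of_mod_eq_zero hmod
      refine Dvd.dvd.mul_right ?_ g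
      rw [hk, pow_mul]
      simpa using sub_dvd_pow_sub_pow ((X : Fq[X]) ^ n) 1 k
    rw [h1, isCoprime_congr_of_dvd_sub h2]
  -- reduce the LHS to coprimality form
  have hLHS : (∀ i : ℕ, i < n → ∀ c : ℕ, c < b → IsNormal Fq q n ((circ q g α) ^ q ^ i - c • α)) ↔
      (∀ i : ℕ, i < n → ∀ c : ℕ, c < b →
        IsCoprime ((X : Fq[X]) ^ n - 1) (X ^ i * g - C ((c : ℕ) : Fq))) := by
    constructor <;> intro H i hi c hc
    · have := H i hi c hc
      rw [hβc] at this
      exact (key _).mp this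
    · rw [hβc]
      exact (key _).mpr (H i hi c hc)
  rw [hLHS]
  constructor
  · intro H j hj c hc
    rcases Nat.eq_zero_or_pos j with rfl | hj0
    · refine (hshift 0 0 _ (by simp)).mp (H 0 hn c hc)
    · refine (hshift (n - j) j _ ?_).mp (H (n - j) (by omega) c hc)
      rw [Nat.sub_add_cancel hj.le, Nat.mod_self]
  · intro H i hi c hc
    rcases Nat.eq_zero_or_pos i with rfl | hi0
    · exact (hshift 0 0 _ (by simp)).mpr (H 0 hn c hc)
    · refine (hshift i (n - i) _ ?_).mpr (H (n - i) (by omega) c hc)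
      rw [Nat.add_sub_cancel' hi.le, Nat.mod_self]
end

section
/- Let q = n + 1 be a prime power with q ≥ 3, and let α be a normal element of F_{q^n} over F_q. Then there are no (α, 2)-sociable elements of F_{q^n}. -/
open Polynomial

variable {Fq Fqn : Type*}

/-- Any element of the big field fixed by `x ↦ x ^ q` lies in the image of the base field. -/
lemma aux_fixed_mem [Field Fq] [Fintype Fq] [Field Fqn] [Algebra Fq Fqn]
    {q : ℕ} (hcard : Fintype.card Fq = q) {x : Fqn} (hx : x ^ q = x) :
    ∃ a : Fq, algebraMap Fq Fqn a = x := by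
  classical
  by_contra hcon
  push_neg at hcon
  have hq2 : 2 ≤ q := hcard ▸ Fintype.one_lt_card
  set P : Fqn[X] := X ^ q - X with hP
  have hdeg : P.natDegree = q := by
    have h1 : (X : Fqn[X]).natDegree < ((X : Fqn[X]) ^ q).natDegree := by
      simp only [natDegree_X_pow, natDegree_X]
      omega
    rw [hP, natDegree_sub_eq_left_of_natDegree_lt h1, natDegree_X_pow]
  have hP0 : P ≠ 0 := by
    intro h0
    rw [h0, natDegree_zero] at hdeg
    omega
  have hroot : ∀ y : Fqn, y ^ q = y → y ∈ P.roots.toFinset := by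
    intro y hy
    rw [Multiset.mem_toFinset, mem_roots hP0]
    simp [hP, IsRoot, hy]
  set S : Finset Fqn := Finset.univ.image (algebraMap Fq Fqn) with hS
  have hxS : x ∉ S := by
    intro hmem
    rw [hS, Finset.mem_image] at hmem
    obtain ⟨a, -, ha⟩ := hmem
    exact hcon a ha
  have hsub : insert x S ⊆ P.roots.toFinset := by
    intro y hy
    rcases Finset.mem_insert.mp hy with h | h
    · exact h ▸ hroot x hx
    · rw [hS, Finset.mem_image] at h
      obtain ⟨a, -, ha⟩ := h
      apply hroot
      rw [← ha, ← map_pow, ← hcard, FiniteField.pow_card]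
  have hcardS : S.card = q := by
    rw [hS, Finset.card_image_of_injective _ (algebraMap Fq Fqn).injective,
      Finset.card_univ, hcard]
  have h1 : q + 1 ≤ P.roots.toFinset.card := by
    have := Finset.card_le_card hsub
    rwa [Finset.card_insert_of_notMem hxS, hcardS] at this
  have h2 : P.roots.toFinset.card ≤ q := by
    calc P.roots.toFinset.card ≤ P.roots.card := Multiset.toFinset_card_le _
      _ ≤ P.natDegree := P.card_roots'
      _ = q := hdeg
  omega

theorem stmt18 (q n : ℕ) [Field Fq] [Fintype Fq] [Field Fqn] [Algebra Fq Fqn]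
    (hq : ∃ p k : ℕ, p.Prime ∧ 0 < k ∧ q = p ^ k) (hcard : Fintype.card Fq = q)
    (hqn : q = n + 1) (hq3 : 3 ≤ q) (hrank : Module.finrank Fq Fqn = n)
    (α : Fqn) (hα : IsNormal Fq q n α) :
    ¬ ∃ β : Fqn, ∀ i : ℕ, i < n →
        IsNormal Fq q n (β ^ q ^ i) ∧ IsNormal Fq q n (β ^ q ^ i - α) := by
  classical
  rintro ⟨β, hβ⟩
  obtain ⟨p, k, hp, hk, hqpk⟩ := hq
  have hn0 : 0 < n := by omega
  -- characteristic of Fq is p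
  have hchFq : CharP Fq p := by
    obtain ⟨p', hp'⟩ := CharP.exists Fq
    haveI := hp'
    obtain ⟨m, hp'prime, hcard'⟩ := FiniteField.card Fq p'
    have hpp' : p = p' := by
      have hdvd : p ∣ p' ^ (m : ℕ) := by
        rw [← hcard', hcard, hqpk]
        exact dvd_pow_self p (by omega)
      exact (Nat.prime_dvd_prime_iff_eq hp hp'prime).mp (hp.dvd_of_dvd_pow hdvd)
    rwa [hpp']
  haveI hchFqn : CharP Fqn p :=
    charP_of_injective_algebraMap (algebraMap Fq Fqn).injective p
  haveI : Fact p.Prime := ⟨hp⟩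
  -- finiteness of Fqn
  haveI : FiniteDimensional Fq Fqn := FiniteDimensional.of_finrank_pos (by omega)
  haveI : Finite Fqn := Module.finite_of_finite Fq
  haveI : Fintype Fqn := Fintype.ofFinite Fqn
  have hcardn : Fintype.card Fqn = q ^ n := by
    rw [Module.card_eq_pow_finrank (K := Fq), hcard, hrank]
  have hpown : ∀ δ : Fqn, δ ^ q ^ n = δ := by
    intro δ
    rw [← hcardn]
    exact FiniteField.pow_card δ
  -- generator of the unit group
  obtain ⟨c, hc⟩ := IsCyclic.exists_generator (α := Fqˣ)
  have hordc : orderOf c = n := by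
    rw [orderOf_eq_card_of_forall_mem_zpowers hc, Nat.card_eq_fintype_card,
      Fintype.card_units, hcard]
    omega
  set ch : Fqn := algebraMap Fq Fqn (c : Fq) with hch
  have hch0 : ch ≠ 0 := by
    simp [hch, (algebraMap Fq Fqn).injective.eq_iff.ne, c.ne_zero]
  have hcpow : (c : Fq) ^ n = 1 := by
    have h := pow_orderOf_eq_one c
    rw [hordc] at h
    simpa using congrArg Units.val h
  have hchn : ch ^ n = 1 := by
    rw [hch, ← map_pow, hcpow, map_one]
  -- the linear form f
  set f : Fqn → Fqn :=
    fun δ => ∑ i ∈ Finset.range n, algebraMap Fq Fqn ((c : Fq) ^ (n - 1 - i)) * δ ^ q ^ i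
    with hf
  -- normal elements are not killed by f
  have hfne : ∀ γ : Fqn, IsNormal Fq q n γ → f γ ≠ 0 := by
    intro γ hγ h0
    have hsum : ∑ i : Fin n, ((c : Fq) ^ (n - 1 - (i : ℕ))) • γ ^ q ^ (i : ℕ) = 0 := by
      rw [Fin.sum_univ_eq_sum_range (fun i => ((c : Fq) ^ (n - 1 - i)) • γ ^ q ^ i) n]
      simpa [Algebra.smul_def, hf] using h0
    have := Fintype.linearIndependent_iff.mp hγ.1 _ hsum ⟨0, hn0⟩
    exact pow_ne_zero _ c.ne_zero this
  -- f of a Frobenius image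
  have hfq : ∀ δ : Fqn, f (δ ^ q) = ch * f δ := by
    intro δ
    set g : ℕ → Fqn := fun i => ch ^ (n - i) * δ ^ q ^ i with hg
    have hL : f (δ ^ q) = ∑ i ∈ Finset.range n, g (i + 1) := by
      apply Finset.sum_congr rfl
      intro i hi
      rw [Finset.mem_range] at hi
      rw [hg]
      have h1 : (δ ^ q) ^ q ^ i = δ ^ q ^ (i + 1) := by
        rw [← pow_mul, pow_succ, mul_comm (q ^ i) q]
      have h2 : n - 1 - i = n - (i + 1) := by omega
      rw [h1, h2, hch, map_pow]
    have hR : ch * f δ = ∑ i ∈ Finset.range n, g i := by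
      rw [hf, Finset.mul_sum]
      apply Finset.sum_congr rfl
      intro i hi
      rw [Finset.mem_range] at hi
      rw [hg, hch, map_pow, ← mul_assoc, ← pow_succ']
      congr 2
      omega
    have hgn : g n = g 0 := by
      simp [hg, hpown δ, hchn]
    have h1 := Finset.sum_range_succ' g n
    have h2 := Finset.sum_range_succ g n
    rw [h2, hgn] at h1
    rw [hL, hR]
    exact add_right_cancel h1.symm
  -- iterate
  have hfqj : ∀ j : ℕ, f (β ^ q ^ j) = ch ^ j * f β := by
    intro j
    induction j with
    | zero => simp
    | succ j ih =>
        have : β ^ q ^ (j + 1) = (β ^ q ^ j) ^ q := by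
          rw [← pow_mul, pow_succ]
        rw [this, hfq, ih, pow_succ]
        ring
  -- f is additive w.r.t. subtraction of α
  have hfsub : ∀ δ : Fqn, f (δ - α) = f δ - f α := by
    intro δ
    rw [hf, ← Finset.sum_sub_distrib]
    apply Finset.sum_congr rfl
    intro i _
    have h1 : (δ - α) ^ q ^ i = δ ^ q ^ i - α ^ q ^ i := by
      simp only [hqpk, ← pow_mul]
      exact sub_pow_char_pow _ _ _
    rw [h1]
    ring
  -- f values are Frobenius eigenvectors
  have hfpow : ∀ δ : Fqn, (f δ) ^ q = ch * f δ := by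
    intro δ
    have hφ : ∀ x : Fqn, x ^ q = iterateFrobenius Fqn p k x := by
      intro x
      rw [iterateFrobenius_def, hqpk]
    have hstep : (f δ) ^ q = f (δ ^ q) := by
      rw [hφ, hf, map_sum]
      apply Finset.sum_congr rfl
      intro i _
      rw [map_mul, ← hφ, ← hφ]
      congr 1
      · rw [← map_pow]
        congr 1
        rw [← hcard]
        exact FiniteField.pow_card _
      · rw [← pow_mul, ← pow_mul, mul_comm]
    rw [hstep, hfq]
  set A : Fqn := f α with hA
  set B : Fqn := f β with hB
  have hA0 : A ≠ 0 := hfne α hα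
  have hB0 : B ≠ 0 := by
    apply hfne β
    have := (hβ 0 hn0).1
    simpa using this
  -- the main constraint
  have hcond : ∀ j : ℕ, j < n → ch ^ j * B ≠ A := by
    intro j hj heq
    have h2 := hfne _ (hβ j hj).2
    rw [hfsub, hfqj j, heq, sub_self] at h2
    exact h2 rfl
  -- the ratio is in Fq
  have hr : (B * A⁻¹) ^ q = B * A⁻¹ := by
    rw [mul_pow, inv_pow, hfpow, hfpow, ← hA, ← hB, mul_inv]
    field_simp
  obtain ⟨a, ha⟩ := aux_fixed_mem hcard hr
  have ha0 : a ≠ 0 := by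
    intro h0
    rw [h0, map_zero] at ha
    rcases mul_eq_zero.mp ha.symm with h | h
    · exact hB0 h
    · exact absurd h (inv_ne_zero hA0)
  have hBa : B = algebraMap Fq Fqn a * A := by
    rw [ha, mul_assoc, inv_mul_cancel₀ hA0, mul_one]
  -- express a as a power of the generator
  obtain ⟨z, hz'⟩ := hc (Units.mk0 a ha0)
  have hz : c ^ z = Units.mk0 a ha0 := hz'
  set m : ℕ := (z % (n : ℤ)).toNat with hm
  have hmn : m < n := by
    have h1 : z % (n : ℤ) < n := Int.emod_lt_of_pos z (by exact_mod_cast hn0)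
    omega
  have hcm : c ^ m = Units.mk0 a ha0 := by
    have h0 : (0 : ℤ) ≤ z % (n : ℤ) := Int.emod_nonneg z (by exact_mod_cast hn0.ne')
    have : c ^ (m : ℤ) = c ^ z := by
      rw [hm, Int.toNat_of_nonneg h0]
      have := zpow_mod_orderOf c z
      rwa [hordc] at this
    rw [← zpow_natCast, this, hz]
  have haval : a = (c : Fq) ^ m := by
    have := congrArg Units.val hcm
    simpa [Units.val_pow_eq_pow_val] using this.symm
  have hBch : B = ch ^ m * A := by
    rw [hBa, haval, map_pow, ← hch]
  -- final contradiction
  rcases Nat.eq_zero_or_pos m with hm0 | hm0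
  · apply hcond 0 hn0
    rw [hm0] at hBch
    simpa using hBch
  · apply hcond (n - m) (by omega)
    rw [hBch, ← mul_assoc, ← pow_add]
    have : n - m + m = n := by omega
    rw [this, hchn, one_mul]
end

section
/- Suppose (x^n − 1)/(x − 1) is irreducible over F_q (equivalently q is primitive modulo n), and let α be a normal element of F_{q^n} with trace n ≠ 0 in F_q. Then the number of (α, 2)-sociable elements of F_{q^n} is (q − 2)(q^{n−1} − n − 1), and the number of (α, 2)-lonely elements is (q − 2)(n − 1). -/
open Polynomial

variable {Fq Fqn : Type*}

section Aux

variable [Field Fq] [Fintype Fq] [Field Fqn] [Algebra Fq Fqn] {q n : ℕ}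

lemma aux_charP {p k : ℕ} (hp : p.Prime) (hk : 0 < k)
    (hpk : Fintype.card Fq = p ^ k) : CharP Fq p := by
  obtain ⟨p', hcp'⟩ := CharP.exists Fq
  haveI := hcp'
  have hp' : p'.Prime := CharP.char_is_prime Fq p'
  obtain ⟨m, -, hm⟩ := FiniteField.card Fq p'
  have hdvd : p' ∣ p ^ k := by
    rw [← hpk, hm]; exact dvd_pow_self p' m.pos.ne'
  have : p' = p :=
    (Nat.prime_dvd_prime_iff_eq hp' hp).mp (hp'.dvd_of_dvd_pow hdvd)
  rwa [← this]

lemma aux_char (hq : ∃ p k : ℕ, p.Prime ∧ 0 < k ∧ q = p ^ k) (hcard : Fintype.card Fq = q) :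
    (∀ (m : ℕ) (x y : Fqn), (x + y) ^ q ^ m = x ^ q ^ m + y ^ q ^ m) ∧
    (∀ (m : ℕ) (x y : Fqn), (x - y) ^ q ^ m = x ^ q ^ m - y ^ q ^ m) := by
  obtain ⟨p, k, hp, hk, rfl⟩ := hq
  haveI : Fact p.Prime := ⟨hp⟩
  haveI : CharP Fq p := aux_charP hp hk hcard
  haveI : CharP Fqn p := charP_of_injective_algebraMap (algebraMap Fq Fqn).injective p
  constructor <;> intro m x y <;> rw [← pow_mul]
  · exact add_pow_char_pow x y p (k*m)
  · exact sub_pow_char_pow x y (k*m)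

lemma aux_powq (hcard : Fintype.card Fq = q) (a : Fq) : a ^ q = a := by
  rw [← hcard]; exact FiniteField.pow_card a

lemma aux_algfix (hcard : Fintype.card Fq = q) (m : ℕ) (a : Fq) :
    (algebraMap Fq Fqn a) ^ q ^ m = algebraMap Fq Fqn a := by
  rw [← map_pow]
  congr 1
  induction m with
  | zero => simp
  | succ i ih => rw [pow_succ, pow_mul, ih, aux_powq hcard]

lemma aux_memR [Fintype Fqn] (hq : ∃ p k : ℕ, p.Prime ∧ 0 < k ∧ q = p ^ k) (hcard : Fintype.card Fq = q)
    (x : Fqn) : x ^ q = x ↔ ∃ a : Fq, algebraMap Fq Fqn a = x := by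
  classical
  have hq2 : 2 ≤ q := by
    obtain ⟨p, k, hp, hk, rfl⟩ := hq
    calc 2 ≤ p := hp.two_le
    _ ≤ p ^ k := Nat.le_self_pow hk.ne' p
  constructor
  · intro hx
    set P : Fqn[X] := X ^ q - X with hP
    have hcoe : P.coeff q = 1 := by
      rw [hP, Polynomial.coeff_sub, Polynomial.coeff_X_pow, if_pos rfl,
        Polynomial.coeff_X, if_neg (by omega : ¬1 = q), sub_zero]
    have hP0 : P ≠ 0 := by
      intro h
      rw [h, Polynomial.coeff_zero] at hcoe
      exact one_ne_zero hcoe.symm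
    have hdeg : P.natDegree ≤ q := by
      refine le_trans (Polynomial.natDegree_sub_le _ _) ?_
      rw [Polynomial.natDegree_X_pow, Polynomial.natDegree_X]
      exact max_le le_rfl (by omega)
    set F1 : Finset Fqn := (Finset.univ : Finset Fq).image (algebraMap Fq Fqn) with hF1
    set F2 : Finset Fqn := Finset.univ.filter (fun y : Fqn => y ^ q = y) with hF2
    have hsub : F1 ⊆ F2 := by
      intro y hy
      simp only [hF1, Finset.mem_image] at hy
      obtain ⟨a, -, rfl⟩ := hy
      simp only [hF2, Finset.mem_filter, Finset.mem_univ, true_and]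
      rw [← map_pow, aux_powq hcard]
    have hF2sub : F2 ⊆ P.roots.toFinset := by
      intro y hy
      simp only [hF2, Finset.mem_filter, Finset.mem_univ, true_and] at hy
      rw [Multiset.mem_toFinset, Polynomial.mem_roots hP0]
      simp [hP, Polynomial.IsRoot, sub_eq_zero, hy]
    have hcard2 : F2.card ≤ q :=
      le_trans (Finset.card_le_card hF2sub)
        (le_trans (Multiset.toFinset_card_le _) (le_trans (Polynomial.card_roots' P) hdeg))
    have hcard1 : F1.card = q := by
      rw [hF1, Finset.card_image_of_injective _ (algebraMap Fq Fqn).injective,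
        Finset.card_univ, hcard]
    have heq : F1 = F2 := Finset.eq_of_subset_of_card_le hsub (by omega)
    have hxF2 : x ∈ F2 := by
      simp only [hF2, Finset.mem_filter, Finset.mem_univ, true_and]; exact hx
    rw [← heq, hF1, Finset.mem_image] at hxF2
    obtain ⟨a, -, ha⟩ := hxF2
    exact ⟨a, ha⟩
  · rintro ⟨a, rfl⟩
    have := aux_algfix (Fqn := Fqn) hcard 1 a
    rwa [pow_one] at this

/-- Frobenius as an `Fq`-linear map. -/
noncomputable def frobL (q : ℕ)
    (hadd : ∀ x y : Fqn, (x + y) ^ q = x ^ q + y ^ q)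
    (hfix : ∀ a : Fq, (algebraMap Fq Fqn a) ^ q = algebraMap Fq Fqn a) : Fqn →ₗ[Fq] Fqn where
  toFun x := x ^ q
  map_add' := hadd
  map_smul' a x := by
    simp only [Algebra.smul_def, mul_pow, hfix, RingHom.id_apply]

lemma frobL_pow (q : ℕ)
    (hadd : ∀ x y : Fqn, (x + y) ^ q = x ^ q + y ^ q)
    (hfix : ∀ a : Fq, (algebraMap Fq Fqn a) ^ q = algebraMap Fq Fqn a)
    (i : ℕ) (x : Fqn) : ((frobL q hadd hfix) ^ i) x = x ^ q ^ i := by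
  induction i generalizing x with
  | zero => simp
  | succ m ih =>
    rw [pow_succ, Module.End.mul_apply]
    show (frobL q hadd hfix ^ m) (x ^ q) = _
    rw [ih (x ^ q), ← pow_mul, ← pow_succ']

lemma aux_trace_frob (hq : ∃ p k : ℕ, p.Prime ∧ 0 < k ∧ q = p ^ k)
    (hcard : Fintype.card Fq = q) [Finite Fqn] (x : Fqn) :
    Algebra.trace Fq Fqn (x ^ q) = Algebra.trace Fq Fqn x := by
  have hq0 : q ≠ 0 := by
    obtain ⟨p, k, hp, hk, rfl⟩ := hq
    exact pow_ne_zero k hp.pos.ne'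
  have hadd : ∀ a b : Fqn, (a + b) ^ q = a ^ q + b ^ q := by
    intro a b
    have := (aux_char hq hcard).1 1 a b
    rwa [pow_one] at this
  have hfix : ∀ a : Fq, (algebraMap Fq Fqn a) ^ q = algebraMap Fq Fqn a := by
    intro a
    have := aux_algfix (Fqn := Fqn) hcard 1 a
    rwa [pow_one] at this
  let F : Fqn →ₐ[Fq] Fqn :=
    { toFun := fun y => y ^ q
      map_one' := one_pow q
      map_mul' := fun a b => mul_pow a b q
      map_zero' := zero_pow hq0
      map_add' := hadd
      commutes' := hfix }
  have hFinj : Function.Injective F := F.toRingHom.injective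
  let e : Fqn ≃ₐ[Fq] Fqn :=
    AlgEquiv.ofBijective F ((Finite.injective_iff_bijective).1 hFinj)
  exact Algebra.trace_eq_of_algEquiv e x

lemma aux_trace_pow (hq : ∃ p k : ℕ, p.Prime ∧ 0 < k ∧ q = p ^ k)
    (hcard : Fintype.card Fq = q) [Finite Fqn] (i : ℕ) (x : Fqn) :
    Algebra.trace Fq Fqn (x ^ q ^ i) = Algebra.trace Fq Fqn x := by
  induction i generalizing x with
  | zero => rw [pow_zero, pow_one]
  | succ m ih =>
    rw [pow_succ, pow_mul, aux_trace_frob hq hcard, ih]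

lemma aux_sum_conj [Fintype Fqn] (hq : ∃ p k : ℕ, p.Prime ∧ 0 < k ∧ q = p ^ k)
    (hcard : Fintype.card Fq = q) (hrank : Module.finrank Fq Fqn = n)
    (hn0 : (n : Fq) ≠ 0) (β : Fqn) :
    ∑ i ∈ Finset.range n, β ^ q ^ i = algebraMap Fq Fqn (Algebra.trace Fq Fqn β) := by
  have hcardn : Fintype.card Fqn = q ^ n := by
    rw [← hrank, ← hcard]; exact Module.card_eq_pow_finrank
  have hpowqn : β ^ q ^ n = β := by rw [← hcardn]; exact FiniteField.pow_card β
  have hadd : ∀ a b : Fqn, (a + b) ^ q = a ^ q + b ^ q := by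
    intro a b; have := (aux_char hq hcard).1 1 a b; rwa [pow_one] at this
  have hfix : ∀ a : Fq, (algebraMap Fq Fqn a) ^ q = algebraMap Fq Fqn a := by
    intro a; have := aux_algfix (Fqn := Fqn) hcard 1 a; rwa [pow_one] at this
  set φ := frobL q hadd hfix with hφ
  set s : Fqn := ∑ i ∈ Finset.range n, β ^ q ^ i with hs
  have hsq : s ^ q = s := by
    have h1 : s ^ q = ∑ i ∈ Finset.range n, (β ^ q ^ i) ^ q := by
      show φ s = _
      rw [hs, map_sum]
      rfl
    have h2 : ∀ i : ℕ, (β ^ q ^ i) ^ q = β ^ q ^ (i + 1) := by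
      intro i; rw [← pow_mul, ← pow_succ]
    rw [h1]
    simp_rw [h2]
    have h3 := Finset.sum_range_succ' (fun i => β ^ q ^ i) n
    have h4 := Finset.sum_range_succ (fun i => β ^ q ^ i) n
    rw [h4] at h3
    simp only [pow_zero, pow_one, hpowqn] at h3
    rw [hs]
    exact (add_right_cancel h3).symm
  obtain ⟨t, ht⟩ := (aux_memR hq hcard s).mp hsq
  have htr1 : Algebra.trace Fq Fqn s = n * Algebra.trace Fq Fqn β := by
    rw [hs, map_sum]
    rw [Finset.sum_congr rfl (fun i _ => aux_trace_pow hq hcard i β)]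
    rw [Finset.sum_const, Finset.card_range, nsmul_eq_mul]
  have htr2 : Algebra.trace Fq Fqn s = n * t := by
    rw [← ht, Algebra.trace_algebraMap, hrank, nsmul_eq_mul]
  have : t = Algebra.trace Fq Fqn β := by
    have := htr2.symm.trans htr1
    exact mul_left_cancel₀ hn0 this
  rw [← ht, this]

lemma aux_normal_iff [Fintype Fqn] (hq : ∃ p k : ℕ, p.Prime ∧ 0 < k ∧ q = p ^ k)
    (hcard : Fintype.card Fq = q) (hn : 2 ≤ n) (hrank : Module.finrank Fq Fqn = n)
    (hirr : Irreducible (∑ i ∈ Finset.range n, (X : Fq[X]) ^ i))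
    (hn0 : (n : Fq) ≠ 0) (β : Fqn) :
    IsNormal Fq q n β ↔ Algebra.trace Fq Fqn β ≠ 0 ∧ β ^ q ≠ β := by
  classical
  haveI : Nonempty (Fin n) := ⟨⟨0, by omega⟩⟩
  have hq2 : 2 ≤ q := by
    obtain ⟨p, k, hp, hk, rfl⟩ := hq
    calc 2 ≤ p := hp.two_le
    _ ≤ p ^ k := Nat.le_self_pow hk.ne' p
  constructor
  · rintro ⟨hli, -⟩
    constructor
    · intro h0
      have hs := aux_sum_conj hq hcard hrank hn0 β
      rw [h0, map_zero] at hs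
      have hz := Fintype.linearIndependent_iff.mp hli (fun _ => 1) ?_ ⟨0, by omega⟩
      · simpa using hz
      · rw [Fin.sum_univ_eq_sum_range (fun i => (1 : Fq) • β ^ q ^ i) n]
        simpa using hs
    · intro hfix
      have h01 : (fun i : Fin n => β ^ q ^ (i : ℕ)) ⟨0, by omega⟩ =
          (fun i : Fin n => β ^ q ^ (i : ℕ)) ⟨1, by omega⟩ := by
        simp only [pow_zero, pow_one, hfix]
      have := hli.injective h01
      simp only [Fin.mk.injEq] at this
      omega
  · rintro ⟨h1, h2⟩
    have hadd : ∀ a b : Fqn, (a + b) ^ q = a ^ q + b ^ q := by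
      intro a b; have := (aux_char hq hcard).1 1 a b; rwa [pow_one] at this
    have hfix : ∀ a : Fq, (algebraMap Fq Fqn a) ^ q = algebraMap Fq Fqn a := by
      intro a; have := aux_algfix (Fqn := Fqn) hcard 1 a; rwa [pow_one] at this
    set φ := frobL q hadd hfix with hφ
    have hφpow : ∀ (i : ℕ) (x : Fqn), (φ ^ i) x = x ^ q ^ i := frobL_pow q hadd hfix
    have hcardn : Fintype.card Fqn = q ^ n := by
      rw [← hrank, ← hcard]; exact Module.card_eq_pow_finrank
    have hpowqn : ∀ x : Fqn, x ^ q ^ n = x := fun x => by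
      rw [← hcardn]; exact FiniteField.pow_card x
    set Φ : Fq[X] := ∑ i ∈ Finset.range n, (X : Fq[X]) ^ i with hΦdef
    set I : Ideal Fq[X] :=
      { carrier := {h : Fq[X] | (aeval φ h) β = 0}
        add_mem' := fun {a b} ha hb => by
          simp only [Set.mem_setOf_eq, map_add, LinearMap.add_apply] at *
          rw [ha, hb, add_zero]
        zero_mem' := by simp
        smul_mem' := fun c h hh => by
          simp only [Set.mem_setOf_eq, smul_eq_mul, map_mul, Module.End.mul_apply] at *
          rw [hh, map_zero] } with hI
    have hmem : ∀ h : Fq[X], h ∈ I ↔ (aeval φ h) β = 0 := fun _ => Iff.rfl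
    have hXn : (X ^ n - 1 : Fq[X]) ∈ I := by
      rw [hmem, map_sub, map_pow, aeval_X, map_one, LinearMap.sub_apply,
        Module.End.one_apply, hφpow, hpowqn, sub_self]
    have hΦI : Φ ∉ I := by
      rw [hmem, hΦdef, map_sum]
      have he : ∀ i ∈ Finset.range n, (aeval φ ((X : Fq[X]) ^ i)) β = β ^ q ^ i := by
        intro i _
        rw [map_pow, aeval_X, hφpow]
      rw [LinearMap.sum_apply, Finset.sum_congr rfl he,
        aux_sum_conj hq hcard hrank hn0 β]
      intro hcontra
      exact h1 ((map_eq_zero_iff _ (algebraMap Fq Fqn).injective).mp hcontra)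
    have hX1 : (X - 1 : Fq[X]) ∉ I := by
      rw [hmem, map_sub, aeval_X, map_one, LinearMap.sub_apply, Module.End.one_apply]
      intro hcontra
      have : φ β = β := by
        have := sub_eq_zero.mp hcontra
        exact this
      exact h2 this
    -- linear independence
    have hli : LinearIndependent Fq fun i : Fin n => β ^ q ^ (i : ℕ) := by
      rw [Fintype.linearIndependent_iff]
      intro g hg
      by_contra hne
      push_neg at hne
      obtain ⟨i0, hi0⟩ := hne
      set f : Fq[X] := ∑ i : Fin n, C (g i) * X ^ (i : ℕ) with hf
      have hcoeff : ∀ i : Fin n, f.coeff (i : ℕ) = g i := by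
        intro i
        rw [hf, Polynomial.finset_sum_coeff]
        rw [Finset.sum_eq_single i]
        · simp
        · intro b _ hb
          rw [Polynomial.coeff_C_mul, Polynomial.coeff_X_pow,
            if_neg (fun h => hb (Fin.ext (by omega))), mul_zero]
        · intro h; exact absurd (Finset.mem_univ i) h
      have hf0 : f ≠ 0 := fun h => hi0 (by rw [← hcoeff i0, h, Polynomial.coeff_zero])
      have hfdeg : f.degree < (n : ℕ) := by
        refine lt_of_le_of_lt (Polynomial.degree_sum_le _ _) ?_
        rw [Finset.sup_lt_iff (by exact_mod_cast WithBot.bot_lt_coe n)]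
        intro i _
        refine lt_of_le_of_lt (Polynomial.degree_C_mul_X_pow_le _ _) ?_
        exact_mod_cast i.isLt
      have haeval : (aeval φ f) β = 0 := by
        rw [hf, map_sum, LinearMap.sum_apply]
        have he : ∀ i : Fin n, (aeval φ (C (g i) * X ^ (i : ℕ))) β = g i • β ^ q ^ (i : ℕ) := by
          intro i
          rw [map_mul, aeval_C, map_pow, aeval_X, Module.End.mul_apply,
            hφpow, Module.algebraMap_end_apply]
        rw [Finset.sum_congr rfl (fun i _ => he i)]
        exact hg
      have hfI : f ∈ I := haeval
      set gp := Submodule.IsPrincipal.generator I with hgpdef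
      have hspan : Ideal.span {gp} = I := Ideal.span_singleton_generator I
      have hdvd_iff : ∀ h : Fq[X], h ∈ I ↔ gp ∣ h := fun h => by
        rw [← hspan, Ideal.mem_span_singleton]
      have hgf : gp ∣ f := (hdvd_iff f).1 hfI
      have hgXn : gp ∣ X ^ n - 1 := (hdvd_iff _).1 hXn
      have hgp0 : gp ≠ 0 := by
        intro h
        rcases hgf with ⟨c, hc⟩
        exact hf0 (by rw [hc, h, zero_mul])
      have hgpI : gp ∈ I := by
        rw [← hspan]; exact Submodule.mem_span_singleton_self gp
      have hfact : (X ^ n - 1 : Fq[X]) = Φ * (X - 1) := (geom_sum_mul X n).symm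
      have hX1ne : (X - 1 : Fq[X]) ≠ 0 := by
        have := Polynomial.X_sub_C_ne_zero (1 : Fq)
        rwa [map_one] at this
      have hX1deg : (X - 1 : Fq[X]).natDegree = 1 := by
        have := Polynomial.natDegree_X_sub_C (1 : Fq)
        rwa [map_one] at this
      have hΦ0 : Φ ≠ 0 := hirr.ne_zero
      have hΦdeg : Φ.natDegree = n - 1 := by
        have hXn1 : (X ^ n - 1 : Fq[X]).natDegree = n := by
          have := Polynomial.natDegree_X_pow_sub_C (n := n) (r := (1 : Fq))
          rwa [map_one] at this
        rw [hfact, Polynomial.natDegree_mul hΦ0 hX1ne, hX1deg] at hXn1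
        omega
      have hfdeg' : f.natDegree ≤ n - 1 := by
        have := (Polynomial.natDegree_lt_iff_degree_lt hf0).mpr hfdeg
        omega
      have hgdeg : gp.natDegree ≤ n - 1 :=
        le_trans (Polynomial.natDegree_le_of_dvd hgf hf0) hfdeg'
      by_cases hPdvd : Φ ∣ gp
      · obtain ⟨h, hgph⟩ := hPdvd
        have hh0 : h ≠ 0 := fun hh => hgp0 (by rw [hgph, hh, mul_zero])
        have hsum : Φ.natDegree + h.natDegree ≤ n - 1 := by
          rw [← Polynomial.natDegree_mul hΦ0 hh0, ← hgph]; exact hgdeg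
        have hhdeg : h.natDegree = 0 := by omega
        obtain ⟨c, hc⟩ := Polynomial.natDegree_eq_zero.mp hhdeg
        have hc0 : c ≠ 0 := by
          intro h0
          rw [h0, map_zero] at hc
          exact hh0 hc.symm
        apply hΦI
        have hmul : gp * C c⁻¹ ∈ I := Ideal.mul_mem_right _ I hgpI
        have : gp * C c⁻¹ = Φ := by
          rw [hgph, ← hc, mul_assoc, ← map_mul, mul_inv_cancel₀ hc0, map_one, mul_one]
        rwa [this] at hmul
      · have hco : IsCoprime gp Φ := ((hirr.coprime_iff_not_dvd).mpr hPdvd).symm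
        have hgX1 : gp ∣ (X - 1 : Fq[X]) := by
          refine hco.dvd_of_dvd_mul_right ?_
          rw [← mul_comm Φ (X - 1), ← hfact]
          exact hgXn
        obtain ⟨h, hXh⟩ := hgX1
        have hh0 : h ≠ 0 := by
          intro hh
          rw [hh, mul_zero] at hXh
          exact hX1ne hXh
        have hdeg1 : gp.natDegree + h.natDegree = 1 := by
          rw [← Polynomial.natDegree_mul hgp0 hh0, ← hXh, hX1deg]
        rcases Nat.eq_zero_or_pos gp.natDegree with hg0 | hg1
        · obtain ⟨c, hc⟩ := Polynomial.natDegree_eq_zero.mp hg0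
          have hc0 : c ≠ 0 := by
            intro h0
            rw [h0, map_zero] at hc
            exact hgp0 hc.symm
          have hone : (1 : Fq[X]) ∈ I := by
            have hmul : gp * C c⁻¹ ∈ I := Ideal.mul_mem_right _ I hgpI
            have : gp * C c⁻¹ = 1 := by
              rw [← hc, ← map_mul, mul_inv_cancel₀ hc0, map_one]
            rwa [this] at hmul
          have hβ0 : β = 0 := by
            have := (hmem 1).mp hone
            rwa [map_one, Module.End.one_apply] at this
          apply h2
          rw [hβ0, zero_pow (by omega : q ≠ 0)]
        · have hhdeg : h.natDegree = 0 := by omega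
          obtain ⟨c, hc⟩ := Polynomial.natDegree_eq_zero.mp hhdeg
          have hc0 : c ≠ 0 := by
            intro h0
            rw [h0, map_zero] at hc
            exact hh0 hc.symm
          apply hX1
          rw [hXh, ← hc]
          exact Ideal.mul_mem_right _ I hgpI
    refine ⟨hli, ?_⟩
    apply hli.span_eq_top_of_card_eq_finrank
    rw [Fintype.card_fin, hrank]

end Aux

theorem stmt19 (q n : ℕ) [Field Fq] [Fintype Fq] [Field Fqn] [Algebra Fq Fqn]
    (hq : ∃ p k : ℕ, p.Prime ∧ 0 < k ∧ q = p ^ k) (hcard : Fintype.card Fq = q)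
    (hn : 2 ≤ n) (hcop : Nat.Coprime n q) (hrank : Module.finrank Fq Fqn = n)
    (hirr : Irreducible (∑ i ∈ Finset.range n, (X : Fq[X]) ^ i))
    (α : Fqn) (hα : IsNormal Fq q n α) (htr : Algebra.trace Fq Fqn α = (n : Fq))
    (hn0 : (n : Fq) ≠ 0) :
    Set.ncard {β : Fqn | ∀ i : ℕ, i < n →
        IsNormal Fq q n (β ^ q ^ i) ∧ IsNormal Fq q n (β ^ q ^ i - α)} =
      (q - 2) * (q ^ (n - 1) - n - 1) ∧
    Set.ncard {β : Fqn | (IsNormal Fq q n β ∧ IsNormal Fq q n (β - α)) ∧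
        ¬ ∀ i : ℕ, i < n →
          IsNormal Fq q n (β ^ q ^ i) ∧ IsNormal Fq q n (β ^ q ^ i - α)} =
      (q - 2) * (n - 1) := by
  classical
  have hq2 : 2 ≤ q := by
    obtain ⟨p, k, hp, hk, rfl⟩ := hq
    calc 2 ≤ p := hp.two_le
    _ ≤ p ^ k := Nat.le_self_pow hk.ne' p
  haveI : Nonempty (Fin n) := ⟨⟨0, by omega⟩⟩
  letI : Fintype Fqn :=
    Module.fintypeOfFintype
      (Module.Basis.mk (v := fun i : Fin n => α ^ q ^ (i : ℕ)) hα.1 hα.2.ge)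
  have hcardn : Fintype.card Fqn = q ^ n := by
    rw [← hrank, ← hcard]; exact Module.card_eq_pow_finrank
  have hpowqn : ∀ x : Fqn, x ^ q ^ n = x := fun x => by
    rw [← hcardn]; exact FiniteField.pow_card x
  have haddm : ∀ (m : ℕ) (x y : Fqn), (x + y) ^ q ^ m = x ^ q ^ m + y ^ q ^ m :=
    (aux_char hq hcard).1
  have hsubm : ∀ (m : ℕ) (x y : Fqn), (x - y) ^ q ^ m = x ^ q ^ m - y ^ q ^ m :=
    (aux_char hq hcard).2
  have halg : ∀ (m : ℕ) (a : Fq), (algebraMap Fq Fqn a) ^ q ^ m = algebraMap Fq Fqn a :=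
    fun m a => aux_algfix hcard m a
  have hinj : ∀ m : ℕ, Function.Injective fun x : Fqn => x ^ q ^ m := by
    intro m x y hxy
    simp only at hxy
    have h0 : (x - y) ^ q ^ m = 0 := by rw [hsubm m x y, hxy, sub_self]
    have := pow_eq_zero_iff (pow_ne_zero m (by omega : q ≠ 0)) |>.mp h0
    exact sub_eq_zero.mp this
  have memR : ∀ x : Fqn, x ^ q = x ↔ ∃ a : Fq, algebraMap Fq Fqn a = x :=
    aux_memR hq hcard
  have trpow : ∀ (i : ℕ) (x : Fqn),
      Algebra.trace Fq Fqn (x ^ q ^ i) = Algebra.trace Fq Fqn x :=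
    fun i x => aux_trace_pow hq hcard i x
  have normal_iff : ∀ β : Fqn,
      IsNormal Fq q n β ↔ Algebra.trace Fq Fqn β ≠ 0 ∧ β ^ q ≠ β :=
    fun β => aux_normal_iff hq hcard hn hrank hirr hn0 β
  have tralg : ∀ (e : Fqn) (c : Fq),
      Algebra.trace Fq Fqn (e + algebraMap Fq Fqn c) = Algebra.trace Fq Fqn e + n * c := by
    intro e c
    rw [map_add, Algebra.trace_algebraMap, hrank, nsmul_eq_mul]
  have trconj : ∀ j : ℕ, Algebra.trace Fq Fqn (α ^ q ^ j) = (n : Fq) := by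
    intro j; rw [trpow, htr]
  have conj_fix_iff : ∀ (i : ℕ) (x : Fqn), ((x ^ q ^ i) ^ q = x ^ q ^ i) ↔ x ^ q = x := by
    intro i x
    constructor
    · intro h
      apply hinj i
      simp only
      calc (x ^ q) ^ q ^ i = (x ^ q ^ i) ^ q := by rw [← pow_mul, ← pow_mul, mul_comm]
      _ = x ^ q ^ i := h
    · intro h
      rw [← pow_mul, mul_comm, pow_mul, h]
  have conj_notR : ∀ j : ℕ, j < n → ∀ c : Fq, α ^ q ^ j ≠ algebraMap Fq Fqn c := by
    intro j hj c heq
    have hfix : (α ^ q ^ j) ^ q = α ^ q ^ j := by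
      rw [heq]
      have := halg 1 c; rwa [pow_one] at this
    have hαfix : α ^ q = α := (conj_fix_iff j α).mp hfix
    have h01 : (fun i : Fin n => α ^ q ^ (i : ℕ)) ⟨0, by omega⟩ =
        (fun i : Fin n => α ^ q ^ (i : ℕ)) ⟨1, by omega⟩ := by
      simp only [pow_zero, pow_one, hαfix]
    have := hα.1.injective h01
    simp only [Fin.mk.injEq] at this
    omega
  have sumconjα : ∑ i ∈ Finset.range n, α ^ q ^ i = algebraMap Fq Fqn ((n : Fq)) := by
    rw [aux_sum_conj hq hcard hrank hn0 α, htr]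
  have conj_ne : ∀ j k : ℕ, j < n → k < n → j ≠ k → ∀ c : Fq,
      α ^ q ^ j ≠ α ^ q ^ k + algebraMap Fq Fqn c := by
    intro j k hj hk hjk c heq
    obtain ⟨p, kk, hp, hkk, hpk⟩ := hq
    haveI : Fact p.Prime := ⟨hp⟩
    haveI : CharP Fq p := aux_charP hp hkk (by rw [hcard, hpk])
    set g : Fin n → Fq := fun i =>
      (if (i : ℕ) = j then 1 else 0) - (if (i : ℕ) = k then 1 else 0) - c / n with hg
    have hsum : ∑ i : Fin n, g i • α ^ q ^ (i : ℕ) = 0 := by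
      simp only [hg, sub_smul]
      rw [Finset.sum_sub_distrib, Finset.sum_sub_distrib]
      have e1 : ∑ i : Fin n, (if (i : ℕ) = j then (1:Fq) else 0) • α ^ q ^ (i : ℕ)
          = α ^ q ^ j := by
        rw [Fin.sum_univ_eq_sum_range (fun i => (if i = j then (1:Fq) else 0) • α ^ q ^ i) n]
        simp only [ite_smul, one_smul, zero_smul]
        rw [Finset.sum_ite_eq' (Finset.range n) j (fun i => α ^ q ^ i)]
        rw [if_pos (Finset.mem_range.mpr hj)]
      have e2 : ∑ i : Fin n, (if (i : ℕ) = k then (1:Fq) else 0) • α ^ q ^ (i : ℕ)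
          = α ^ q ^ k := by
        rw [Fin.sum_univ_eq_sum_range (fun i => (if i = k then (1:Fq) else 0) • α ^ q ^ i) n]
        simp only [ite_smul, one_smul, zero_smul]
        rw [Finset.sum_ite_eq' (Finset.range n) k (fun i => α ^ q ^ i)]
        rw [if_pos (Finset.mem_range.mpr hk)]
      have e3 : ∑ i : Fin n, (c / (n:Fq)) • α ^ q ^ (i : ℕ) = algebraMap Fq Fqn c := by
        rw [← Finset.smul_sum]
        rw [Fin.sum_univ_eq_sum_range (fun i => α ^ q ^ i) n]
        rw [sumconjα, Algebra.smul_def, ← map_mul, div_mul_cancel₀ c hn0]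
      rw [e1, e2, e3, heq]
      ring
    have hz := Fintype.linearIndependent_iff.mp hα.1 g hsum
    have hgj : ((if j = j then (1:Fq) else 0) - (if j = k then (1:Fq) else 0)) - c / n = 0 := by
      have := hz ⟨j, hj⟩; rw [hg] at this; exact this
    have hgk : ((if k = j then (1:Fq) else 0) - (if k = k then (1:Fq) else 0)) - c / n = 0 := by
      have := hz ⟨k, hk⟩; rw [hg] at this; exact this
    rw [if_pos rfl, if_neg hjk] at hgj
    rw [if_neg (fun h => hjk h.symm), if_pos rfl] at hgk
    have hcn1 : c / (n:Fq) = 1 := by linear_combination -hgj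
    have h2 : (2 : Fq) = 0 := by linear_combination hgj - hgk
    have hp2 : p = 2 := by
      have hdvd : p ∣ 2 := (CharP.cast_eq_zero_iff Fq p 2).mp h2
      exact (Nat.prime_dvd_prime_iff_eq hp Nat.prime_two).mp hdvd
    have h2n : ¬ (2 ∣ n) := by
      intro h2n
      have h2q : 2 ∣ q := by rw [hpk, hp2]; exact dvd_pow_self 2 (by omega)
      have hdd := Nat.dvd_gcd h2n h2q
      rw [Nat.Coprime] at hcop
      rw [hcop] at hdd
      omega
    have hn3 : 3 ≤ n := by omega
    obtain ⟨l, hl, hlj, hlk⟩ : ∃ l, l < n ∧ l ≠ j ∧ l ≠ k := by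
      refine ⟨if j ≠ 0 ∧ k ≠ 0 then 0 else if j ≠ 1 ∧ k ≠ 1 then 1 else 2, ?_, ?_, ?_⟩ <;>
        split_ifs <;> omega
    have hgl : ((if l = j then (1:Fq) else 0) - (if l = k then (1:Fq) else 0)) - c / n = 0 := by
      have := hz ⟨l, hl⟩; rw [hg] at this; exact this
    rw [if_neg hlj, if_neg hlk] at hgl
    have hone : (1 : Fq) = 0 := by rw [← hcn1]; linear_combination -hgl
    exact one_ne_zero hone
  have soc_iff : ∀ β : Fqn,
      (∀ i : ℕ, i < n → IsNormal Fq q n (β ^ q ^ i) ∧ IsNormal Fq q n (β ^ q ^ i - α)) ↔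
      ((Algebra.trace Fq Fqn β ≠ 0 ∧ Algebra.trace Fq Fqn β ≠ (n : Fq)) ∧
        (β ^ q ≠ β ∧ ∀ j : ℕ, j < n → ∀ c : Fq, β ≠ α ^ q ^ j + algebraMap Fq Fqn c)) := by
    intro β
    constructor
    · intro h
      obtain ⟨hN0, hN0'⟩ := h 0 (by omega)
      rw [pow_zero, pow_one] at hN0 hN0'
      have h1 : Algebra.trace Fq Fqn β ≠ 0 := ((normal_iff β).mp hN0).1
      have h3 : β ^ q ≠ β := ((normal_iff β).mp hN0).2
      have h2 : Algebra.trace Fq Fqn β ≠ (n:Fq) := by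
        have hne := ((normal_iff _).mp hN0').1
        rw [map_sub, htr] at hne
        intro hc; exact hne (by rw [hc, sub_self])
      refine ⟨⟨h1, h2⟩, h3, ?_⟩
      intro j hj c hβ
      by_cases hj0 : j = 0
      · subst hj0
        rw [pow_zero, pow_one] at hβ
        have hfx : (β - α) ^ q = β - α := by
          rw [hβ, add_sub_cancel_left]
          have := halg 1 c; rwa [pow_one] at this
        exact ((normal_iff _).mp hN0').2 hfx
      · have hilt : n - j < n := by omega
        obtain ⟨-, hNi'⟩ := h (n - j) hilt
        have hpow : β ^ q ^ (n - j) = α + algebraMap Fq Fqn c := by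
          rw [hβ, haddm, halg]
          congr 1
          rw [← pow_mul, ← pow_add]
          have hadd' : j + (n - j) = n := by omega
          rw [hadd', hpowqn]
        have hfixc : (β ^ q ^ (n - j) - α) ^ q = β ^ q ^ (n - j) - α := by
          rw [hpow, add_sub_cancel_left]
          have := halg 1 c; rwa [pow_one] at this
        exact ((normal_iff _).mp hNi').2 hfixc
    · rintro ⟨⟨h1, h2⟩, h3, h4⟩ i hi
      constructor
      · rw [normal_iff]
        refine ⟨by rw [trpow]; exact h1, ?_⟩
        intro hfix
        exact h3 ((conj_fix_iff i β).mp hfix)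
      · rw [normal_iff]
        constructor
        · rw [map_sub, trpow, htr]
          intro hc
          exact h2 (by rwa [sub_eq_zero] at hc)
        · intro hfix
          obtain ⟨c, hc⟩ := (memR _).mp hfix
          have hβi : β ^ q ^ i = α + algebraMap Fq Fqn c := by rw [hc]; ring
          by_cases hi0 : i = 0
          · subst hi0
            rw [pow_zero, pow_one] at hβi
            exact h4 0 (by omega) c (by rw [pow_zero, pow_one]; exact hβi)
          · have hjlt : n - i < n := by omega
            apply h4 (n - i) hjlt c
            have hββ : β = (β ^ q ^ i) ^ q ^ (n - i) := by
              rw [← pow_mul, ← pow_add]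
              have hadd' : i + (n - i) = n := by omega
              rw [hadd', hpowqn]
            rw [hββ, hβi, haddm, halg]
  -- counting machinery
  set Rcs : Fqn → Finset Fqn :=
    fun e => (Finset.univ : Finset Fq).image (fun c : Fq => e + algebraMap Fq Fqn c) with hRcs
  have memRcs : ∀ (e x : Fqn), x ∈ Rcs e ↔ ∃ c : Fq, x = e + algebraMap Fq Fqn c := by
    intro e x
    simp only [hRcs, Finset.mem_image, Finset.mem_univ, true_and]
    constructor
    · rintro ⟨c, hc⟩; exact ⟨c, hc.symm⟩
    · rintro ⟨c, hc⟩; exact ⟨c, hc.symm⟩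
  set O : Finset Fqn := insert 0 ((Finset.range n).image fun j => α ^ q ^ j) with hO
  set B : Finset Fqn := O.biUnion Rcs with hB
  set T : Finset Fqn := Finset.univ.filter
    (fun x : Fqn => Algebra.trace Fq Fqn x ≠ 0 ∧ Algebra.trace Fq Fqn x ≠ (n:Fq)) with hT
  have memT : ∀ x : Fqn,
      x ∈ T ↔ (Algebra.trace Fq Fqn x ≠ 0 ∧ Algebra.trace Fq Fqn x ≠ (n:Fq)) := by
    intro x; simp only [hT, Finset.mem_filter, Finset.mem_univ, true_and]
  have fib_card : ∀ t : Fq,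
      (Finset.univ.filter fun x : Fqn => Algebra.trace Fq Fqn x = t).card =
      (Finset.univ.filter fun x : Fqn => Algebra.trace Fq Fqn x = 0).card := by
    intro t
    have himg : (Finset.univ.filter fun x : Fqn => Algebra.trace Fq Fqn x = 0).image
        (fun y => y + (t / n) • α) =
        (Finset.univ.filter fun x : Fqn => Algebra.trace Fq Fqn x = t) := by
      ext x
      simp only [Finset.mem_image, Finset.mem_filter, Finset.mem_univ, true_and]
      constructor
      · rintro ⟨y, hy, rfl⟩
        rw [map_add, hy, map_smul, htr, smul_eq_mul, div_mul_cancel₀ t hn0, zero_add]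
      · intro hx
        refine ⟨x - (t / n) • α, ?_, by abel⟩
        rw [map_sub, hx, map_smul, htr, smul_eq_mul, div_mul_cancel₀ t hn0, sub_self]
    rw [← himg, Finset.card_image_of_injective _ (add_left_injective _)]
  have total : ∑ t : Fq,
      (Finset.univ.filter fun x : Fqn => Algebra.trace Fq Fqn x = t).card = q ^ n := by
    rw [← hcardn, ← Finset.card_univ]
    exact (Finset.card_eq_sum_card_fiberwise (fun x _ => Finset.mem_univ _)).symm
  have hK : (Finset.univ.filter fun x : Fqn => Algebra.trace Fq Fqn x = 0).card
      = q ^ (n - 1) := by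
    have hq0 : 0 < q := by omega
    have h1 : q * (Finset.univ.filter fun x : Fqn => Algebra.trace Fq Fqn x = 0).card
        = q ^ n := by
      rw [← total, Finset.sum_congr rfl (fun t _ => fib_card t), Finset.sum_const,
        Finset.card_univ, hcard, smul_eq_mul]
    have h2 : q ^ n = q * q ^ (n - 1) := by
      conv_lhs => rw [show n = (n - 1) + 1 by omega]
      rw [pow_succ']
    rw [h2] at h1
    exact Nat.eq_of_mul_eq_mul_left hq0 h1
  have hTcard : T.card = (q - 2) * q ^ (n - 1) := by
    have hAcard : ((Finset.univ : Finset Fq).filter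
        fun t : Fq => t ≠ 0 ∧ t ≠ (n:Fq)).card = q - 2 := by
      have hset : ((Finset.univ : Finset Fq).filter fun t : Fq => t ≠ 0 ∧ t ≠ (n:Fq)) =
          Finset.univ \ {0, (n:Fq)} := by
        ext t
        simp [not_or]
      rw [hset, Finset.card_sdiff_of_subset (Finset.subset_univ _), Finset.card_univ, hcard]
      have hp2 : ({0, (n:Fq)} : Finset Fq).card = 2 := by
        rw [Finset.card_insert_of_notMem (by simpa using (Ne.symm hn0)),
          Finset.card_singleton]
      rw [hp2]
    rw [hT]
    rw [Finset.card_eq_sum_card_fiberwise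
      (f := fun x : Fqn => Algebra.trace Fq Fqn x)
      (t := (Finset.univ : Finset Fq).filter fun t : Fq => t ≠ 0 ∧ t ≠ (n:Fq))
      (by intro x hx; simp only [Finset.mem_coe, Finset.mem_filter, Finset.mem_univ, true_and] at hx ⊢; exact hx)]
    have heach : ∀ t ∈ (Finset.univ : Finset Fq).filter (fun t : Fq => t ≠ 0 ∧ t ≠ (n:Fq)),
        ((Finset.univ.filter (fun x : Fqn =>
            Algebra.trace Fq Fqn x ≠ 0 ∧ Algebra.trace Fq Fqn x ≠ (n:Fq))).filter
          (fun x => Algebra.trace Fq Fqn x = t)).card = q ^ (n - 1) := by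
      intro t ht
      simp only [Finset.mem_filter, Finset.mem_univ, true_and] at ht
      have hff : (Finset.univ.filter (fun x : Fqn =>
          Algebra.trace Fq Fqn x ≠ 0 ∧ Algebra.trace Fq Fqn x ≠ (n:Fq))).filter
          (fun x => Algebra.trace Fq Fqn x = t)
          = Finset.univ.filter (fun x : Fqn => Algebra.trace Fq Fqn x = t) := by
        rw [Finset.filter_filter]
        ext x
        simp only [Finset.mem_filter, Finset.mem_univ, true_and]
        constructor
        · rintro ⟨-, hx⟩; exact hx
        · intro hx; exact ⟨by rw [hx]; exact ⟨ht.1, ht.2⟩, hx⟩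
      rw [hff, fib_card t, hK]
    rw [Finset.sum_congr rfl heach, Finset.sum_const, hAcard, smul_eq_mul]
  have RcsT : ∀ e : Fqn, (T ∩ Rcs e).card = q - 2 := by
    intro e
    have him : T ∩ Rcs e =
        ((Finset.univ : Finset Fq).filter fun c : Fq =>
          Algebra.trace Fq Fqn (e + algebraMap Fq Fqn c) ≠ 0 ∧
          Algebra.trace Fq Fqn (e + algebraMap Fq Fqn c) ≠ (n:Fq)).image
          (fun c => e + algebraMap Fq Fqn c) := by
      ext x
      constructor
      · intro hx
        rw [Finset.mem_inter] at hx
        obtain ⟨hxT, hxR⟩ := hx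
        obtain ⟨c, rfl⟩ := (memRcs e x).mp hxR
        rw [memT] at hxT
        exact Finset.mem_image.mpr ⟨c, Finset.mem_filter.mpr ⟨Finset.mem_univ c, hxT⟩, rfl⟩
      · intro hx
        obtain ⟨c, hc, rfl⟩ := Finset.mem_image.mp hx
        rw [Finset.mem_filter] at hc
        rw [Finset.mem_inter, memT, memRcs]
        exact ⟨hc.2, ⟨c, rfl⟩⟩
    have hinj2 : Function.Injective (fun c : Fq => e + algebraMap Fq Fqn c) :=
      fun c d hcd => (algebraMap Fq Fqn).injective (add_left_cancel hcd)
    rw [him, Finset.card_image_of_injective _ hinj2]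
    have hcond : ∀ c : Fq,
        (Algebra.trace Fq Fqn (e + algebraMap Fq Fqn c) ≠ 0 ∧
         Algebra.trace Fq Fqn (e + algebraMap Fq Fqn c) ≠ (n:Fq)) ↔
        (c ≠ (0 - Algebra.trace Fq Fqn e) / n ∧
         c ≠ ((n:Fq) - Algebra.trace Fq Fqn e) / n) := by
      intro c
      rw [tralg]
      have key : ∀ s : Fq, Algebra.trace Fq Fqn e + n * c = s ↔
          c = (s - Algebra.trace Fq Fqn e) / n := by
        intro s
        rw [eq_div_iff hn0]
        constructor
        · intro h; linear_combination h
        · intro h; linear_combination h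
      constructor
      · rintro ⟨ha, hb⟩
        exact ⟨fun hc => ha ((key 0).mpr hc), fun hc => hb ((key (n:Fq)).mpr hc)⟩
      · rintro ⟨ha, hb⟩
        exact ⟨fun hc => ha ((key 0).mp hc), fun hc => hb ((key (n:Fq)).mp hc)⟩
    have hfe : ((Finset.univ : Finset Fq).filter fun c : Fq =>
        Algebra.trace Fq Fqn (e + algebraMap Fq Fqn c) ≠ 0 ∧
        Algebra.trace Fq Fqn (e + algebraMap Fq Fqn c) ≠ (n:Fq)) =
        Finset.univ \ {(0 - Algebra.trace Fq Fqn e) / n,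
          ((n:Fq) - Algebra.trace Fq Fqn e) / n} := by
      ext c
      simp only [Finset.mem_filter, Finset.mem_univ, true_and, Finset.mem_sdiff,
        Finset.mem_insert, Finset.mem_singleton, hcond c, not_or]
    rw [hfe, Finset.card_sdiff_of_subset (Finset.subset_univ _), Finset.card_univ, hcard]
    have hnepair : (0 - Algebra.trace Fq Fqn e) / n ≠ ((n:Fq) - Algebra.trace Fq Fqn e) / n := by
      intro hc
      rw [div_eq_div_iff hn0 hn0] at hc
      have hc2 : (0 - Algebra.trace Fq Fqn e) = ((n:Fq) - Algebra.trace Fq Fqn e) :=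
        mul_right_cancel₀ hn0 hc
      apply hn0
      linear_combination -hc2
    rw [Finset.card_insert_of_notMem (by simpa using hnepair), Finset.card_singleton]
  have Odiff : ∀ e ∈ O, ∀ e' ∈ O, e ≠ e' → ∀ c : Fq, e ≠ e' + algebraMap Fq Fqn c := by
    intro e he e' he' hne c heq
    rw [hO, Finset.mem_insert, Finset.mem_image] at he he'
    rcases he with rfl | ⟨j, hj, rfl⟩ <;> rcases he' with rfl | ⟨k, hk, rfl⟩
    · exact hne rfl
    · apply conj_notR k (Finset.mem_range.mp hk) (-c)
      rw [map_neg]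
      linear_combination -heq
    · rw [zero_add] at heq
      exact conj_notR j (Finset.mem_range.mp hj) c heq
    · by_cases hjk : j = k
      · subst hjk
        exact hne rfl
      · exact conj_ne j k (Finset.mem_range.mp hj) (Finset.mem_range.mp hk) hjk c heq
  have hOcard : O.card = n + 1 := by
    have hinjO : Set.InjOn (fun j => α ^ q ^ j) ↑(Finset.range n) := by
      intro j hj k hk hjk2
      by_contra hne2
      exact conj_ne j k (Finset.mem_range.mp hj) (Finset.mem_range.mp hk) hne2 0
        (by rw [map_zero, add_zero]; exact hjk2)
    have h0miss : (0 : Fqn) ∉ (Finset.range n).image fun j => α ^ q ^ j := by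
      intro h0
      obtain ⟨j, hj, hj0⟩ := Finset.mem_image.mp h0
      exact conj_notR j (Finset.mem_range.mp hj) 0 (by rw [map_zero]; exact hj0)
    rw [hO, Finset.card_insert_of_notMem h0miss, Finset.card_image_of_injOn hinjO,
      Finset.card_range]
  have hTBcard : (T ∩ B).card = (n + 1) * (q - 2) := by
    rw [hB, Finset.inter_biUnion]
    rw [Finset.card_biUnion]
    · rw [Finset.sum_congr rfl (fun e _ => RcsT e), Finset.sum_const, hOcard, smul_eq_mul]
    · intro e he e' he' hne
      apply Finset.disjoint_left.mpr
      intro x hx hx'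
      rw [Finset.mem_inter] at hx hx'
      obtain ⟨-, hxe⟩ := hx
      obtain ⟨-, hxe'⟩ := hx'
      obtain ⟨c, rfl⟩ := (memRcs e x).mp hxe
      obtain ⟨d, hd⟩ := (memRcs e' _).mp hxe'
      apply Odiff e he e' he' hne (d - c)
      rw [map_sub]
      linear_combination hd
  have hS1card : (T \ B).card = (q - 2) * (q ^ (n - 1) - n - 1) := by
    have h1 := Finset.card_inter_add_card_sdiff T B
    have h2 : (T \ B).card = T.card - (T ∩ B).card := by omega
    rw [h2, hTcard, hTBcard]
    rw [Nat.sub_sub, mul_comm (q-2) (q ^ (n-1)), mul_comm (q-2) (q ^ (n-1) - (n+1)),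
      ← tsub_mul]
  have hS1set : {β : Fqn | ∀ i : ℕ, i < n →
      IsNormal Fq q n (β ^ q ^ i) ∧ IsNormal Fq q n (β ^ q ^ i - α)} = ↑(T \ B) := by
    ext β
    rw [Set.mem_setOf_eq, soc_iff β, Finset.mem_coe, Finset.mem_sdiff, memT]
    constructor
    · rintro ⟨⟨h1, h2⟩, h3, h4⟩
      refine ⟨⟨h1, h2⟩, ?_⟩
      intro hβB
      rw [hB, Finset.mem_biUnion] at hβB
      obtain ⟨e, he, hβe⟩ := hβB
      obtain ⟨c, rfl⟩ := (memRcs e _).mp hβe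
      rw [hO, Finset.mem_insert, Finset.mem_image] at he
      rcases he with rfl | ⟨j, hj, rfl⟩
      · apply h3
        rw [zero_add]
        have := halg 1 c; rwa [pow_one] at this
      · exact h4 j (Finset.mem_range.mp hj) c rfl
    · rintro ⟨⟨h1, h2⟩, hnB⟩
      refine ⟨⟨h1, h2⟩, ?_, ?_⟩
      · intro hfix
        obtain ⟨a, ha⟩ := (memR β).mp hfix
        apply hnB
        rw [hB, Finset.mem_biUnion]
        refine ⟨0, by rw [hO]; exact Finset.mem_insert_self _ _, ?_⟩
        rw [memRcs]
        exact ⟨a, by rw [zero_add, ha]⟩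
      · intro j hj c hβ
        apply hnB
        rw [hB, Finset.mem_biUnion]
        refine ⟨α ^ q ^ j, ?_, ?_⟩
        · rw [hO]
          exact Finset.mem_insert_of_mem
            (Finset.mem_image.mpr ⟨j, Finset.mem_range.mpr hj, rfl⟩)
        · rw [memRcs]; exact ⟨c, hβ⟩
  set P2 : Finset (ℕ × Fq) :=
    (Finset.Ico 1 n) ×ˢ ((Finset.univ : Finset Fq).filter fun c : Fq => c ≠ 0 ∧ c ≠ -1)
    with hP2
  set S2 : Finset Fqn := P2.image (fun x : ℕ × Fq => α ^ q ^ x.1 + algebraMap Fq Fqn x.2)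
    with hS2
  have hS2set : {β : Fqn | (IsNormal Fq q n β ∧ IsNormal Fq q n (β - α)) ∧
      ¬ ∀ i : ℕ, i < n → IsNormal Fq q n (β ^ q ^ i) ∧ IsNormal Fq q n (β ^ q ^ i - α)}
      = ↑S2 := by
    ext β
    rw [Set.mem_setOf_eq, Finset.mem_coe, hS2, Finset.mem_image]
    constructor
    · rintro ⟨⟨hNβ, hNβα⟩, hnsoc⟩
      rw [normal_iff] at hNβ hNβα
      obtain ⟨h1, h2⟩ := hNβ
      obtain ⟨h1', h2'⟩ := hNβα
      have h1n : Algebra.trace Fq Fqn β ≠ (n:Fq) := by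
        rw [map_sub, htr] at h1'
        intro hc; exact h1' (by rw [hc, sub_self])
      have hex : ∃ j, j < n ∧ ∃ c : Fq, β = α ^ q ^ j + algebraMap Fq Fqn c := by
        by_contra hno
        push_neg at hno
        exact hnsoc ((soc_iff β).mpr ⟨⟨h1, h1n⟩, h2, fun j hj c => hno j hj c⟩)
      obtain ⟨j, hj, c, hβ⟩ := hex
      have hj0 : j ≠ 0 := by
        intro h0
        subst h0
        rw [pow_zero, pow_one] at hβ
        apply h2'
        rw [hβ, add_sub_cancel_left]
        have := halg 1 c; rwa [pow_one] at this
      have htrβ : Algebra.trace Fq Fqn β = (n:Fq) + n * c := by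
        rw [hβ, tralg, trconj]
      have hc0 : c ≠ 0 := by
        intro h0
        apply h1n
        rw [htrβ, h0, mul_zero, add_zero]
      have hcm1 : c ≠ -1 := by
        intro hm
        apply h1
        rw [htrβ, hm]
        ring
      exact ⟨(j, c), Finset.mem_product.mpr ⟨Finset.mem_Ico.mpr ⟨by omega, hj⟩,
        Finset.mem_filter.mpr ⟨Finset.mem_univ c, hc0, hcm1⟩⟩, hβ.symm⟩
    · rintro ⟨x, hmem, rfl⟩
      obtain ⟨hjm, hcm⟩ := Finset.mem_product.mp hmem
      rw [Finset.mem_Ico] at hjm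
      rw [Finset.mem_filter] at hcm
      obtain ⟨-, hc0, hcm1⟩ := hcm
      have htrβ : Algebra.trace Fq Fqn (α ^ q ^ x.1 + algebraMap Fq Fqn x.2)
          = (n:Fq) + n * x.2 := by
        rw [tralg, trconj]
      have hNβ : IsNormal Fq q n (α ^ q ^ x.1 + algebraMap Fq Fqn x.2) := by
        rw [normal_iff]
        constructor
        · rw [htrβ]
          intro hc
          apply hcm1
          have hmm : (n:Fq) * (1 + x.2) = 0 := by linear_combination hc
          have := (mul_eq_zero.mp hmm).resolve_left hn0
          linear_combination this
        · intro hfix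
          obtain ⟨d, hd⟩ := (memR _).mp hfix
          apply conj_notR x.1 (by omega) (d - x.2)
          rw [map_sub]
          linear_combination -hd
      have hNβα : IsNormal Fq q n (α ^ q ^ x.1 + algebraMap Fq Fqn x.2 - α) := by
        rw [normal_iff]
        constructor
        · rw [map_sub, htrβ, htr]
          intro hc
          apply hc0
          have hmm : (n:Fq) * x.2 = 0 := by linear_combination hc
          exact (mul_eq_zero.mp hmm).resolve_left hn0
        · intro hfix
          obtain ⟨d, hd⟩ := (memR _).mp hfix
          apply conj_ne x.1 0 (by omega) (by omega) (by omega) (d - x.2)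
          rw [map_sub, pow_zero, pow_one]
          linear_combination -hd
      refine ⟨⟨hNβ, hNβα⟩, ?_⟩
      intro hsoc
      exact ((soc_iff _).mp hsoc).2.2 x.1 (by omega) x.2 rfl
  have hS2card : S2.card = (q - 2) * (n - 1) := by
    have hinj3 : Set.InjOn (fun x : ℕ × Fq => α ^ q ^ x.1 + algebraMap Fq Fqn x.2) ↑P2 := by
      intro x hx y hy hxy
      simp only at hxy
      have hx' := Finset.mem_product.mp (Finset.mem_coe.mp hx)
      have hy' := Finset.mem_product.mp (Finset.mem_coe.mp hy)
      obtain ⟨hx1, -⟩ := hx'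
      obtain ⟨hy1, -⟩ := hy'
      rw [Finset.mem_Ico] at hx1 hy1
      by_cases h12 : x.1 = y.1
      · rw [h12] at hxy
        have h22 : x.2 = y.2 := (algebraMap Fq Fqn).injective (add_left_cancel hxy)
        exact Prod.ext h12 h22
      · exfalso
        apply conj_ne x.1 y.1 (by omega) (by omega) h12 (y.2 - x.2)
        rw [map_sub]
        linear_combination hxy
    have hf : ((Finset.univ : Finset Fq).filter fun c : Fq => c ≠ 0 ∧ c ≠ -1).card
        = q - 2 := by
      have hset : ((Finset.univ : Finset Fq).filter fun c : Fq => c ≠ 0 ∧ c ≠ -1) =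
          Finset.univ \ {0, (-1 : Fq)} := by
        ext c
        simp [not_or]
      rw [hset, Finset.card_sdiff_of_subset (Finset.subset_univ _), Finset.card_univ, hcard]
      have hp2 : ({0, (-1:Fq)} : Finset Fq).card = 2 := by
        rw [Finset.card_insert_of_notMem (by simp), Finset.card_singleton]
      rw [hp2]
    rw [hS2, Finset.card_image_of_injOn hinj3, hP2, Finset.card_product, Nat.card_Ico,
      hf, mul_comm]
  constructor
  · rw [hS1set, Set.ncard_coe_finset, hS1card]
  · rw [hS2set, Set.ncard_coe_finset, hS2card]
end
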